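/- arXiv:1507.05646 — 7 statements merged into one kernel-verified Lean document; each statement's English description precedes it below -/
import Mathlib

section
/- Let X be a topological space in which every neighborhood of the diagonal in X_d × X (first factor discrete, second factor with the topology of X) belongs to the finest compatible quasi-uniformity 𝒰* on X. Then for every family (N_x)_{x∈X} with each N_x a neighborhood of x in X, there exists a family (M_x)_{x∈X} with each M_x a neighborhood of x such that for every x, the union ⋃_{y∈M_x} M_y ⊆ N_x. -/
/-- A quasi-uniformity on `X`: a filter of reflexive relations, each admitting a
composition-square refinement (no symmetry axiom). -/
structure QuasiUniformity (X : Type*) where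
  uni : Set (Set (X × X))
  univ_mem : Set.univ ∈ uni
  inter_mem : ∀ U ∈ uni, ∀ V ∈ uni, U ∩ V ∈ uni
  superset_mem : ∀ U ∈ uni, ∀ V : Set (X × X), U ⊆ V → V ∈ uni
  refl : ∀ U ∈ uni, ∀ x : X, (x, x) ∈ U
  comp : ∀ U ∈ uni, ∃ V ∈ uni, ∀ a b c : X, (a, b) ∈ V → (b, c) ∈ V → (a, c) ∈ U

/-- A quasi-uniformity is compatible with the topology of `X` if the sets
`U(x) = {y | (x,y) ∈ U}` form a neighborhood base at each `x`. -/
def QuasiUniformity.Compatible {X : Type*} [TopologicalSpace X] (q : QuasiUniformity X) : Prop :=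
  ∀ x : X, ∀ s : Set X, s ∈ nhds x ↔ ∃ U ∈ q.uni, {y | (x, y) ∈ U} ⊆ s

/-- Membership in the finest quasi-uniformity compatible with the topology of `X`. -/
def FineMember {X : Type*} [TopologicalSpace X] (U : Set (X × X)) : Prop :=
  ∃ q : QuasiUniformity X, q.Compatible ∧ U ∈ q.uni


/-- If every neighborhood of the diagonal in `X_d × X` belongs to the finest compatible
quasi-uniformity on `X`, then every neighborhood assignment admits a "square-refining"
neighborhood assignment. -/
theorem nbhd_assignment_refinement_of_fine {X : Type*} [TopologicalSpace X]
    (h : ∀ W : Set (X × X), (∀ x : X, {y | (x, y) ∈ W} ∈ nhds x) → FineMember W) :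
    ∀ N : X → Set X, (∀ x, N x ∈ nhds x) →
      ∃ M : X → Set X, (∀ x, M x ∈ nhds x) ∧ ∀ x, ∀ y ∈ M x, M y ⊆ N x := by
  intro N hN
  obtain ⟨q, hq, hW⟩ := h {p : X × X | p.2 ∈ N p.1} (fun x => by simpa using hN x)
  obtain ⟨V, hV, hVV⟩ := q.comp _ hW
  refine ⟨fun x => {y | (x, y) ∈ V}, fun x => ?_, fun x y hy z hz => hVV x y z hy hz⟩
  exact (hq x _).2 ⟨V, hV, subset_rfl⟩
end

section
/- Let X be a topological space such that for every neighborhood assignment (N_x)_{x∈X} there is a neighborhood assignment (M_x)_{x∈X} with ⋃_{y∈M_x} M_y ⊆ N_x for all x. Then for every neighborhood assignment (N_x)_{x∈X} there exists a quasi-pseudometric d on X such that for each x the function y ↦ d(x,y) is upper semi-continuous and the open ball B_d(x,1) = {y : d(x,y) < 1} is contained in N_x. -/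
/-- If every neighborhood assignment on `X` admits a square-refining neighborhood
assignment, then every neighborhood assignment `N` admits a quasi-pseudometric `d` such that
each `d x ·` is upper semi-continuous and the unit ball `B_d(x,1)` is contained in `N x`. -/
theorem quasiPseudometric_of_nbhd_assignment_refinement {X : Type*} [TopologicalSpace X]
    (h : ∀ N : X → Set X, (∀ x, N x ∈ nhds x) →
      ∃ M : X → Set X, (∀ x, M x ∈ nhds x) ∧ ∀ x, ∀ y ∈ M x, M y ⊆ N x) :
    ∀ N : X → Set X, (∀ x, N x ∈ nhds x) →
      ∃ d : X → X → ℝ, (∀ x y, 0 ≤ d x y) ∧ (∀ x, d x x = 0) ∧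
        (∀ x y z, d x z ≤ d x y + d y z) ∧
        (∀ x, UpperSemicontinuous (d x)) ∧
        (∀ x, {y | d x y < 1} ⊆ N x) := by
  intro N hN
  classical
  -- From the square refinement hypothesis we get a "triple refinement".
  have key : ∀ U : X → Set X, (∀ x, U x ∈ nhds x) →
      ∃ V : X → Set X, (∀ x, V x ∈ nhds x) ∧
        ∀ x, ∀ y ∈ V x, ∀ z ∈ V y, ∀ w ∈ V z, w ∈ U x := by
    intro U hU
    obtain ⟨M, hM, hMU⟩ := h U hU
    obtain ⟨V, hV, hVM⟩ := h M hM
    refine ⟨V, hV, fun x y hy z hz w hw => ?_⟩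
    have hzM : z ∈ M x := hVM x y hy hz
    have hwM : w ∈ M z := hVM z z (mem_of_mem_nhds (hV z)) hw
    exact hMU x z hzM hwM
  choose F hF1 hF2 using key
  -- Iterate to get a sequence of neighborhood assignments.
  let Useq : ℕ → {p : X → Set X // ∀ x, p x ∈ nhds x} := fun n =>
    Nat.rec ⟨N, hN⟩ (fun _ p => ⟨F p.1 p.2, hF1 p.1 p.2⟩) n
  set U : ℕ → X → Set X := fun n => (Useq n).1 with hUdef
  have hU0 : U 0 = N := rfl
  have hUnhds : ∀ n x, U n x ∈ nhds x := fun n => (Useq n).2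
  have hUmem : ∀ n x, x ∈ U n x := fun n x => mem_of_mem_nhds (hUnhds n x)
  have htriple : ∀ n x, ∀ y ∈ U (n+1) x, ∀ z ∈ U (n+1) y, ∀ w ∈ U (n+1) z, w ∈ U n x :=
    fun n => hF2 (Useq n).1 (Useq n).2
  have hUmono : ∀ n x, U (n+1) x ⊆ U n x := fun n x y hy =>
    htriple n x y hy y (hUmem (n+1) y) y (hUmem (n+1) y)
  have hUadd : ∀ m k : ℕ, ∀ x, U (m + k) x ⊆ U m x := by
    intro m k
    induction k with
    | zero => exact fun x y hy => hy
    | succ k ih => exact fun x y hy => ih x (hUmono (m + k) x hy)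
  have hUanti : ∀ m n : ℕ, m ≤ n → ∀ x, U n x ⊆ U m x := by
    intro m n hmn x
    obtain ⟨k, rfl⟩ := Nat.exists_eq_add_of_le hmn
    exact hUadd m k x
  -- The basic "distance" function f.
  set f : X → X → ℝ := fun x y =>
    if hxy : ∃ n, y ∉ U n x then 2 * (2⁻¹ : ℝ) ^ (Nat.find hxy) else 0 with hfdef
  have hf0 : ∀ x y, 0 ≤ f x y := by
    intro x y
    simp only [hfdef]
    split <;> positivity
  have hfself : ∀ x, f x x = 0 := by
    intro x
    simp only [hfdef]
    rw [dif_neg]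
    push_neg
    exact fun n => hUmem n x
  have hf_le : ∀ (n : ℕ) (x y : X), y ∈ U n x → f x y ≤ (2⁻¹ : ℝ) ^ n := by
    intro n x y hy
    simp only [hfdef]
    split
    · rename_i hex
      have hfind : n + 1 ≤ Nat.find hex := by
        rw [Nat.le_find_iff]
        intro m hm
        push_neg
        exact hUanti m n (by omega) x hy
      calc 2 * (2⁻¹ : ℝ) ^ Nat.find hex ≤ 2 * (2⁻¹ : ℝ) ^ (n + 1) := by
            have := pow_le_pow_of_le_one (by norm_num : (0:ℝ) ≤ 2⁻¹)
              (by norm_num : (2⁻¹:ℝ) ≤ 1) hfind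
            linarith
        _ = (2⁻¹ : ℝ) ^ n := by rw [pow_succ]; ring
    · positivity
  have hf_lt : ∀ (n : ℕ) (x y : X), f x y < (2⁻¹ : ℝ) ^ n → y ∈ U (n + 1) x := by
    intro n x y hfy
    by_cases hex : ∃ m, y ∉ U m x
    · rw [hfdef] at hfy
      simp only [dif_pos hex] at hfy
      have h2 : (2⁻¹ : ℝ) ^ (Nat.find hex) < (2⁻¹ : ℝ) ^ (n + 1) := by
        have : (2⁻¹ : ℝ) ^ (n + 1) = 2⁻¹ * (2⁻¹:ℝ)^n := by rw [pow_succ]; ring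
        rw [this]
        nlinarith [pow_pos (by norm_num : (0:ℝ) < 2⁻¹) (Nat.find hex)]
      have hlt : n + 1 < Nat.find hex := by
        by_contra hcon
        push_neg at hcon
        have := pow_le_pow_of_le_one (by norm_num : (0:ℝ) ≤ 2⁻¹)
          (by norm_num : (2⁻¹:ℝ) ≤ 1) hcon
        linarith
      have := Nat.find_min hex hlt
      push_neg at this
      exact this
    · push_neg at hex
      exact hex (n + 1)
  -- The chain lemma.
  have hchain : ∀ k n : ℕ, ∀ c : ℕ → X,
      (∑ i ∈ Finset.range k, f (c i) (c (i + 1))) < (2⁻¹ : ℝ) ^ n → c k ∈ U n (c 0) := by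
    intro k
    induction k using Nat.strong_induction_on with
    | _ k IH =>
      intro n c hS
      cases k with
      | zero => exact hUmem n (c 0)
      | succ m =>
        set S := ∑ i ∈ Finset.range (m + 1), f (c i) (c (i + 1)) with hSdef
        have hS0 : 0 ≤ S := Finset.sum_nonneg fun i _ => hf0 _ _
        set P : ℕ → Prop := fun j => (∑ i ∈ Finset.range j, f (c i) (c (i + 1))) ≤ S / 2
          with hPdef
        have hP0 : P 0 := by simp only [hPdef, Finset.range_zero, Finset.sum_empty]; linarith
        set j := Nat.findGreatest P m with hjdef
        have hj_le : j ≤ m := Nat.findGreatest_le m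
        have hPj : P j := Nat.findGreatest_spec (Nat.zero_le m) hP0
        have hhalf : S / 2 < (2⁻¹ : ℝ) ^ (n + 1) := by
          rw [pow_succ]
          nlinarith [pow_pos (by norm_num : (0:ℝ) < 2⁻¹) n]
        -- first segment
        have hseg1 : c j ∈ U (n + 1) (c 0) := by
          refine IH j (by omega) (n + 1) c ?_
          exact lt_of_le_of_lt hPj hhalf
        -- middle step
        have hmid : c (j + 1) ∈ U (n + 1) (c j) := by
          refine hf_lt n _ _ ?_
          have hle : f (c j) (c (j + 1)) ≤ S := by
            rw [hSdef]
            exact Finset.single_le_sum (f := fun i => f (c i) (c (i + 1)))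
              (fun i _ => hf0 _ _) (Finset.mem_range.mpr (by omega))
          exact lt_of_le_of_lt hle hS
        -- last segment
        have hsplit : S = (∑ i ∈ Finset.range (j + 1), f (c i) (c (i + 1)))
            + ∑ i ∈ Finset.range (m - j), f (c (j + 1 + i)) (c (j + 1 + i + 1)) := by
          rw [hSdef]
          have hmj : m + 1 = (j + 1) + (m - j) := by omega
          rw [hmj, Finset.sum_range_add]
        have htail : (∑ i ∈ Finset.range (m - j), f (c (j + 1 + i)) (c (j + 1 + i + 1)))
            < (2⁻¹ : ℝ) ^ (n + 1) := by
          rcases eq_or_lt_of_le hj_le with heq | hlt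
          · rw [← heq]
            simp only [Nat.sub_self, Finset.range_zero, Finset.sum_empty]
            positivity
          · have hnP : ¬ P (j + 1) := Nat.findGreatest_is_greatest (n := m) (k := j + 1) (by omega) (by omega)
            have hgt : S / 2 < ∑ i ∈ Finset.range (j + 1), f (c i) (c (i + 1)) := by
              simp only [hPdef] at hnP; linarith [not_le.mp hnP]
            have := hsplit
            linarith
        have hseg2 : c (m + 1) ∈ U (n + 1) (c (j + 1)) := by
          have := IH (m - j) (by omega) (n + 1) (fun i => c (j + 1 + i)) (by
            simpa [Nat.add_assoc] using htail)
          have heq : j + 1 + (m - j) = m + 1 := by omega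
          rwa [heq, Nat.add_zero] at this
        exact htriple n (c 0) (c j) hseg1 (c (j + 1)) hmid (c (m + 1)) hseg2
  -- The quasi-pseudometric as infimum over chains.
  set D : X → X → Set ℝ := fun x y =>
    {r | ∃ k : ℕ, ∃ c : ℕ → X, c 0 = x ∧ c k = y ∧ r = ∑ i ∈ Finset.range k, f (c i) (c (i + 1))}
    with hDdef
  have hDne : ∀ x y, (D x y).Nonempty := by
    intro x y
    refine ⟨f x y, 1, fun i => if i = 0 then x else y, rfl, by norm_num, ?_⟩
    simp [Finset.sum_range_one]
  have hDbdd : ∀ x y, BddBelow (D x y) := by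
    intro x y
    refine ⟨0, fun r hr => ?_⟩
    obtain ⟨k, c, _, _, rfl⟩ := hr
    exact Finset.sum_nonneg fun i _ => hf0 _ _
  set d : X → X → ℝ := fun x y => sInf (D x y) with hddef
  have hd0 : ∀ x y, 0 ≤ d x y := by
    intro x y
    refine le_csInf (hDne x y) fun r hr => ?_
    obtain ⟨k, c, _, _, rfl⟩ := hr
    exact Finset.sum_nonneg fun i _ => hf0 _ _
  have hd_le : ∀ x y r, r ∈ D x y → d x y ≤ r := fun x y r hr => csInf_le (hDbdd x y) hr
  have hdself : ∀ x, d x x = 0 := by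
    intro x
    refine le_antisymm ?_ (hd0 x x)
    have : (0 : ℝ) ∈ D x x := ⟨0, fun _ => x, rfl, rfl, by simp⟩
    exact hd_le x x 0 this
  -- concatenation of chains
  have hcat : ∀ x y z r s, r ∈ D x y → s ∈ D y z → r + s ∈ D x z := by
    intro x y z r s hr hs
    obtain ⟨k₁, c₁, hc₁0, hc₁k, rfl⟩ := hr
    obtain ⟨k₂, c₂, hc₂0, hc₂k, rfl⟩ := hs
    refine ⟨k₁ + k₂, fun i => if i < k₁ then c₁ i else c₂ (i - k₁), ?_, ?_, ?_⟩
    · by_cases hk : 0 < k₁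
      · simp [hk, hc₁0]
      · have hk0 : k₁ = 0 := by omega
        simp only [hk0] at hc₁k
        simp [hk0, hc₂0, ← hc₁k, hc₁0]
    · have : ¬ (k₁ + k₂ < k₁) := by omega
      simp only [this, if_false]
      rw [Nat.add_sub_cancel_left]
      exact hc₂k
    · rw [Finset.sum_range_add]
      congr 1
      · refine Finset.sum_congr rfl fun i hi => ?_
        have hi1 : i < k₁ := Finset.mem_range.mp hi
        have h1 : (if i < k₁ then c₁ i else c₂ (i - k₁)) = c₁ i := if_pos hi1
        have h2 : (if i + 1 < k₁ then c₁ (i + 1) else c₂ (i + 1 - k₁)) = c₁ (i + 1) := by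
          by_cases hi2 : i + 1 < k₁
          · exact if_pos hi2
          · have heq1 : i + 1 = k₁ := by omega
            rw [if_neg hi2, heq1, Nat.sub_self, hc₂0, ← hc₁k]
        show f (c₁ i) (c₁ (i + 1)) = f (if i < k₁ then c₁ i else c₂ (i - k₁))
          (if i + 1 < k₁ then c₁ (i + 1) else c₂ (i + 1 - k₁))
        rw [h1, h2]
      · refine Finset.sum_congr rfl fun i hi => ?_
        have hn1 : ¬ (k₁ + i < k₁) := by omega
        have hn2 : ¬ (k₁ + i + 1 < k₁) := by omega
        have e1 : k₁ + i - k₁ = i := by omega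
        have e2 : k₁ + i + 1 - k₁ = i + 1 := by omega
        show f (c₂ i) (c₂ (i + 1)) = f (if k₁ + i < k₁ then c₁ (k₁ + i) else c₂ (k₁ + i - k₁))
          (if k₁ + i + 1 < k₁ then c₁ (k₁ + i + 1) else c₂ (k₁ + i + 1 - k₁))
        rw [if_neg hn1, if_neg hn2, e1, e2]
  have hdtri : ∀ x y z, d x z ≤ d x y + d y z := by
    intro x y z
    have h1 : ∀ s ∈ D y z, d x z ≤ d x y + s := by
      intro s hs
      have h2 : ∀ r ∈ D x y, d x z - s ≤ r := by
        intro r hr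
        have := hd_le x z (r + s) (hcat x y z r s hr hs)
        linarith
      have := le_csInf (hDne x y) h2
      simpa [hddef] using by linarith [this]
    have h3 : ∀ s ∈ D y z, d x z - d x y ≤ s := fun s hs => by linarith [h1 s hs]
    have := le_csInf (hDne y z) h3
    linarith
  -- the ball property
  have hball : ∀ (n : ℕ) (x y : X), d x y < (2⁻¹ : ℝ) ^ n → y ∈ U n x := by
    intro n x y hd
    obtain ⟨r, hr, hrlt⟩ := exists_lt_of_csInf_lt (hDne x y) hd
    obtain ⟨k, c, hc0, hck, rfl⟩ := hr
    have := hchain k n c hrlt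
    rwa [hc0, hck] at this
  -- one-step bound
  have hd_le_f : ∀ x y, d x y ≤ f x y := by
    intro x y
    refine hd_le x y (f x y) ⟨1, fun i => if i = 0 then x else y, rfl, by norm_num, ?_⟩
    simp [Finset.sum_range_one]
  refine ⟨d, hd0, hdself, hdtri, ?_, ?_⟩
  · -- upper semicontinuity
    intro x y
    intro b hb
    obtain ⟨n, hn⟩ := exists_pow_lt_of_lt_one (by linarith : (0:ℝ) < b - d x y)
      (by norm_num : (2⁻¹ : ℝ) < 1)
    filter_upwards [hUnhds n y] with z hz
    have h1 : d y z ≤ (2⁻¹ : ℝ) ^ n := le_trans (hd_le_f y z) (hf_le n y z hz)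
    have h2 : d x z ≤ d x y + d y z := hdtri x y z
    linarith
  · -- unit ball inside N x
    intro x y hy
    have : y ∈ U 0 x := hball 0 x y (by simpa using hy)
    rwa [hU0] at this
end

section
/- Let X be a countable T1 topological space. Then every neighborhood U of the diagonal Δ₁ in X_d × X (first factor discrete) is a member of the finest quasi-uniformity on X; equivalently, every neighborhood assignment (N_x)_{x∈X} admits a neighborhood assignment (M_x)_{x∈X} with ⋃_{y∈M_x} M_y ⊆ N_x for all x ∈ X. -/
noncomputable def Maux {X : Type*} [TopologicalSpace X] (r : X → ℕ) (N : X → Set X)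
    (x : X) : Set X :=
  interior (N x) ∩ (⋂ y, ⋂ (_ : r y < r x), ⋂ (_ : x ∈ Maux r N y), Maux r N y)
    ∩ {y : X | ∃ _ : r y < r x, ¬ Maux r N y ⊆ N x}ᶜ
termination_by r x

theorem Maux_main {X : Type*} [TopologicalSpace X] [T1Space X] (r : X → ℕ)
    (hr : Function.Injective r) (N : X → Set X) (hN : ∀ x, N x ∈ nhds x) (x : X) :
    IsOpen (Maux r N x) ∧ x ∈ Maux r N x ∧ Maux r N x ⊆ N x := by
  suffices H : ∀ n (x : X), r x = n → IsOpen (Maux r N x) ∧ x ∈ Maux r N x ∧ Maux r N x ⊆ N x from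
    H (r x) x rfl
  intro n
  induction n using Nat.strong_induction_on with
  | _ n IH0 =>
  intro x hx
  have IH : ∀ y, r y < r x → IsOpen (Maux r N y) ∧ y ∈ Maux r N y ∧ Maux r N y ⊆ N y :=
    fun y hy => IH0 (r y) (hx ▸ hy) y rfl
  have hfin : {y : X | r y < r x}.Finite := by
    have : {y : X | r y < r x} ⊆ r ⁻¹' (Set.Iio (r x)) := fun y hy => hy
    exact ((Set.finite_Iio (r x)).preimage hr.injOn).subset this
  rw [Maux]
  refine ⟨?_, ?_, ?_⟩
  · apply IsOpen.inter
    apply IsOpen.inter isOpen_interior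
    · have heq : (⋂ y, ⋂ (_ : r y < r x), ⋂ (_ : x ∈ Maux r N y), Maux r N y)
          = ⋂ y ∈ {y : X | r y < r x ∧ x ∈ Maux r N y}, Maux r N y := by
        ext z; simp [and_imp]
      rw [heq]
      apply Set.Finite.isOpen_biInter (hfin.subset (fun y hy => hy.1))
      intro y hy
      exact (IH y hy.1).1
    · rw [isOpen_compl_iff]
      apply Set.Finite.isClosed
      exact hfin.subset (fun y hy => hy.1)
  · refine ⟨⟨?_, ?_⟩, ?_⟩
    · exact mem_interior_iff_mem_nhds.2 (hN x)
    · simp only [Set.mem_iInter]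
      intro y _ hxy; exact hxy
    · rintro ⟨h, -⟩; exact absurd h (lt_irrefl _)
  · exact fun z hz => interior_subset hz.1.1

theorem Maux_sub {X : Type*} [TopologicalSpace X] [T1Space X] (r : X → ℕ)
    (hr : Function.Injective r) (N : X → Set X) (hN : ∀ x, N x ∈ nhds x) (x : X) :
    ∀ y ∈ Maux r N x, Maux r N y ⊆ N x := by
  intro y hy
  rcases lt_trichotomy (r y) (r x) with h | h | h
  · rw [Maux] at hy
    have := hy.2
    simp only [Set.mem_compl_iff, Set.mem_setOf_eq, not_exists, not_not] at this
    exact this h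
  · have : y = x := hr h
    subst this
    exact (Maux_main r hr N hN y).2.2
  · intro z hz
    rw [Maux] at hz
    have := hz.1.2
    simp only [Set.mem_iInter] at this
    exact (Maux_main r hr N hN x).2.2 (this x h hy)

/-- For a countable T1 space, every neighborhood assignment admits a square-refining
neighborhood assignment (equivalently, every neighborhood of the diagonal in `X_d × X`
belongs to the finest quasi-uniformity on `X`). -/
theorem countable_t1_nbhd_assignment_refinement {X : Type*} [TopologicalSpace X]
    [T1Space X] [Countable X] :
    ∀ N : X → Set X, (∀ x, N x ∈ nhds x) →
      ∃ M : X → Set X, (∀ x, M x ∈ nhds x) ∧ ∀ x, ∀ y ∈ M x, M y ⊆ N x := by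
  intro N hN
  obtain ⟨r, hr⟩ := Countable.exists_injective_nat X
  refine ⟨Maux r N, fun x => ?_, Maux_sub r hr N hN⟩
  exact (Maux_main r hr N hN x).1.mem_nhds (Maux_main r hr N hN x).2.1
end

section
/- Let X be a compact first-countable Hausdorff space. Then every neighborhood assignment (N_x)_{x∈X} admits a neighborhood assignment (M_x)_{x∈X} satisfying ⋃_{y∈M_x} M_y ⊆ N_x for all x ∈ X if and only if X is countable. -/
open Set Topology Filter

namespace NbhdSq

variable {X : Type*} [TopologicalSpace X]

/-! ### Part A : countable implies the square-refinement property -/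

theorem partA [T1Space X] [Countable X] (N : X → Set X) (hN : ∀ x, N x ∈ nhds x) :
    ∃ M : X → Set X, (∀ x, M x ∈ nhds x) ∧ ∀ x, ∀ y ∈ M x, M y ⊆ N x := by
  classical
  obtain ⟨e, he⟩ := Countable.exists_injective_nat X
  set M : X → Set X := fun x =>
    (interior (N x) ∩ ⋂ y ∈ {y | e y < e x ∧ x ∈ interior (N y)}, interior (N y)) ∩
      {z | e z < e x ∧ z ≠ x}ᶜ with hMdef
  have hfin : ∀ x, {y | e y < e x ∧ x ∈ interior (N y)}.Finite := by
    intro x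
    have : {y | e y < e x ∧ x ∈ interior (N y)} ⊆ e ⁻¹' (Set.Iio (e x)) := by
      intro y hy; exact hy.1
    exact ((Set.finite_Iio (e x)).preimage he.injOn).subset this
  have hfin2 : ∀ x, ({z | e z < e x ∧ z ≠ x}).Finite := by
    intro x
    have : {z | e z < e x ∧ z ≠ x} ⊆ e ⁻¹' (Set.Iio (e x)) := fun z hz => hz.1
    exact ((Set.finite_Iio (e x)).preimage he.injOn).subset this
  refine ⟨M, ?_, ?_⟩
  · intro x
    refine Filter.inter_mem (Filter.inter_mem (interior_mem_nhds.2 (hN x)) ?_) ?_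
    · rw [Filter.biInter_mem (hfin x)]
      intro y hy
      exact (isOpen_interior.mem_nhds hy.2)
    · refine ((hfin2 x).isClosed.isOpen_compl).mem_nhds ?_
      simp only [Set.mem_compl_iff, Set.mem_setOf_eq]
      rintro ⟨-, h⟩; exact h rfl
  · intro x y hy
    have hy3 : ¬ (e y < e x ∧ y ≠ x) := hy.2
    by_cases hxy : y = x
    · subst hxy
      exact fun z hz => interior_subset (hz.1.1)
    · have hlt : e x < e y := by
        rcases lt_trichotomy (e y) (e x) with h | h | h
        · exact absurd ⟨h, hxy⟩ hy3
        · exact absurd (he h) hxy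
        · exact h
      have hyint : y ∈ interior (N x) := hy.1.1
      intro z hz
      have := hz.1.2
      have hxmem : x ∈ {w | e w < e y ∧ y ∈ interior (N w)} := ⟨hlt, hyint⟩
      exact interior_subset (Set.mem_iInter₂.1 this x hxmem)



/-- binary tree of sets, splitting by two given functions -/
def treeAux (f g : Set X → Set X) : List Bool → Set X
  | [] => Set.univ
  | b :: s => if b then f (treeAux f g s) else g (treeAux f g s)

/-- the reversed prefix of a branch, as a list (most recent bit consed on) -/
def strPre (z : ℕ → Bool) : ℕ → List Bool
  | 0 => []
  | k + 1 => z k :: strPre z k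

@[simp] lemma strPre_length (z : ℕ → Bool) (k : ℕ) : (strPre z k).length = k := by
  induction k with
  | zero => rfl
  | succ k ih => simp [strPre, ih]

lemma strPre_suffix (z : ℕ → Bool) {k k' : ℕ} (h : k ≤ k') : strPre z k <:+ strPre z k' := by
  induction k' with
  | zero => simpa [Nat.le_zero.1 h]
  | succ k' ih =>
    rcases Nat.lt_or_ge k (k' + 1) with h' | h'
    · exact (ih (Nat.lt_succ_iff.1 h')).trans (List.suffix_cons _ _)
    · have : k = k' + 1 := le_antisymm h h'
      simp [this]

lemma strPre_eq_iff {z z' : ℕ → Bool} {k : ℕ} :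
    strPre z k = strPre z' k ↔ ∀ i < k, z i = z' i := by
  induction k with
  | zero => simp [strPre]
  | succ k ih =>
    simp only [strPre, List.cons.injEq, ih]
    constructor
    · rintro ⟨h1, h2⟩ i hi
      rcases Nat.lt_succ_iff_lt_or_eq.1 hi with h | h
      · exact h2 i h
      · subst h; exact h1
    · intro h
      exact ⟨h k (Nat.lt_succ_self k), fun i hi => h i (hi.trans (Nat.lt_succ_self k))⟩

section Tree

variable (T : List Bool → Set X)
  (hTne : ∀ s, (T s).Nonempty)
  (hTsub : ∀ s b, closure (T (b :: s)) ⊆ T s)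
  (hTdisj : ∀ s, Disjoint (closure (T (true :: s))) (closure (T (false :: s))))

include hTsub in
lemma clT_mono : ∀ {s t : List Bool}, s <:+ t → closure (T t) ⊆ closure (T s) := by
  intro s t h
  induction t with
  | nil => rw [List.suffix_nil.1 h]
  | cons b t ih =>
    rcases List.suffix_cons_iff.1 h with h' | h'
    · rw [h']
    · exact ((hTsub t b).trans subset_closure).trans (ih h')

include hTsub hTdisj in
lemma clT_disj : ∀ {s t : List Bool}, s.length = t.length → s ≠ t →
    Disjoint (closure (T s)) (closure (T t)) := by
  intro s
  induction s with
  | nil =>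
    intro t h hne
    rw [List.length_eq_zero_iff.1 h.symm] at hne
    exact absurd rfl hne
  | cons a s ih =>
    intro t h hne
    rcases t with _ | ⟨b, t⟩
    · simp at h
    · have hlen : s.length = t.length := by simpa using h
      by_cases hst : s = t
      · subst hst
        have hab : a ≠ b := fun hab => hne (by rw [hab])
        cases a <;> cases b
        · exact absurd rfl hab
        · exact (hTdisj s).symm
        · exact hTdisj s
        · exact absurd rfl hab
      · have hd := ih hlen hst
        have h1 : closure (T (a :: s)) ⊆ closure (T s) := (hTsub s a).trans subset_closure
        have h2 : closure (T (b :: t)) ⊆ closure (T t) := (hTsub t b).trans subset_closure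
        exact hd.mono h1 h2

/-- the compact set along a branch -/
def Pbr (z : ℕ → Bool) : Set X := ⋂ k, closure (T (strPre z k))

/-- the "Cantor set" produced by the scheme -/
def Kset : Set X := ⋂ k, ⋃ s ∈ {s : List Bool | s.length = k}, closure (T s)

/-- relative cylinders -/
def Fset (s : List Bool) : Set X := Kset T ∩ closure (T s)

lemma Kset_closed : IsClosed (Kset T) := by
  refine isClosed_iInter fun k => Set.Finite.isClosed_biUnion ?_ fun s _ => isClosed_closure
  exact (List.finite_length_eq Bool k)

lemma Fset_closed (s : List Bool) : IsClosed (Fset T s) :=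
  (Kset_closed T).inter isClosed_closure

lemma Fset_subset_K (s : List Bool) : Fset T s ⊆ Kset T := Set.inter_subset_left

include hTsub in
lemma Pbr_subset_K (z : ℕ → Bool) : Pbr T z ⊆ Kset T := by
  intro x hx
  refine Set.mem_iInter.2 fun k => ?_
  refine Set.mem_biUnion (show strPre z k ∈ {s : List Bool | s.length = k} by simp) ?_
  exact Set.mem_iInter.1 hx k

lemma Pbr_subset_cl (z : ℕ → Bool) (k : ℕ) : Pbr T z ⊆ closure (T (strPre z k)) :=
  Set.iInter_subset _ k

include hTsub in
lemma Pbr_subset_F (z : ℕ → Bool) (k : ℕ) : Pbr T z ⊆ Fset T (strPre z k) :=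
  Set.subset_inter (Pbr_subset_K T hTsub z) (Pbr_subset_cl T z k)

include hTne hTsub in
lemma Pbr_nonempty [CompactSpace X] [T2Space X] (z : ℕ → Bool) : (Pbr T z).Nonempty := by
  refine IsCompact.nonempty_iInter_of_directed_nonempty_isCompact_isClosed
    (fun k => closure (T (strPre z k))) ?_ (fun k => (hTne _).mono subset_closure)
    (fun k => isClosed_closure.isCompact) (fun k => isClosed_closure)
  intro i j
  refine ⟨max i j, clT_mono T hTsub (strPre_suffix z (le_max_left i j)),
    clT_mono T hTsub (strPre_suffix z (le_max_right i j))⟩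

include hTne hTsub in
lemma Fset_nonempty [CompactSpace X] [T2Space X] (z : ℕ → Bool) (k : ℕ) :
    (Fset T (strPre z k)).Nonempty :=
  (Pbr_nonempty T hTne hTsub z).mono (Pbr_subset_F T hTsub z k)

include hTsub in
lemma Fset_antitone (z : ℕ → Bool) {k k' : ℕ} (h : k ≤ k') :
    Fset T (strPre z k') ⊆ Fset T (strPre z k) :=
  Set.inter_subset_inter_right _ (clT_mono T hTsub (strPre_suffix z h))

include hTsub hTdisj in
lemma Pbr_disjoint {z z' : ℕ → Bool} (h : z ≠ z') : Disjoint (Pbr T z) (Pbr T z') := by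
  have : ∃ i, z i ≠ z' i := by
    by_contra hc; push_neg at hc; exact h (funext hc)
  obtain ⟨i, hi⟩ := this
  have hne : strPre z (i + 1) ≠ strPre z' (i + 1) := by
    intro hEq
    exact hi (strPre_eq_iff.1 hEq i (Nat.lt_succ_self i))
  exact (clT_disj T hTsub hTdisj (by simp) hne).mono
    (Pbr_subset_cl T z (i + 1)) (Pbr_subset_cl T z' (i + 1))

include hTsub hTdisj in
lemma exists_branch {x : X} (hx : x ∈ Kset T) : ∃ z, x ∈ Pbr T z := by
  classical
  have hex : ∀ k, ∃ s : List Bool, s.length = k ∧ x ∈ closure (T s) := by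
    intro k
    have := Set.mem_iInter.1 hx k
    simpa using this
  choose s hslen hsmem using hex
  -- uniqueness at each level
  have huniq : ∀ k (t : List Bool), t.length = k → x ∈ closure (T t) → t = s k := by
    intro k t hlen hmem
    by_contra hne
    exact (clT_disj T hTsub hTdisj (by rw [hlen, hslen k]) hne).ne_of_mem hmem (hsmem k) rfl
  set z : ℕ → Bool := fun k => (s (k + 1)).headI with hz
  have hstr : ∀ k, strPre z k = s k := by
    intro k
    induction k with
    | zero => exact (List.length_eq_zero_iff.1 (hslen 0)).symm
    | succ k ih =>
      obtain ⟨b, t, hbt⟩ := List.exists_cons_of_ne_nil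
        (show s (k + 1) ≠ [] from fun h => by simpa [h] using hslen (k + 1))
      have htlen : t.length = k := by
        have := hslen (k + 1); rw [hbt] at this; simpa using this
      have htmem : x ∈ closure (T t) := by
        have := hsmem (k + 1); rw [hbt] at this
        exact subset_closure ((hTsub t b) this)
      have ht : t = s k := huniq k t htlen htmem
      have hhead : z k = b := by rw [hz]; simp [hbt]
      rw [hbt]
      show z k :: strPre z k = b :: t
      rw [hhead, ih, ht]
  exact ⟨z, Set.mem_iInter.2 fun k => by rw [hstr k]; exact hsmem k⟩

include hTsub hTdisj in
lemma Kdiff_closed (s : List Bool) : IsClosed (Kset T \ Fset T s) := by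
  classical
  have heq : Kset T \ Fset T s =
      ⋃ t ∈ {t : List Bool | t.length = s.length ∧ t ≠ s}, Fset T t := by
    ext y
    constructor
    · rintro ⟨hyK, hyF⟩
      have := Set.mem_iInter.1 hyK s.length
      simp only [Set.mem_setOf_eq, Set.mem_iUnion] at this
      obtain ⟨t, htlen, htmem⟩ := this
      have htne : t ≠ s := by
        rintro rfl; exact hyF ⟨hyK, htmem⟩
      exact Set.mem_biUnion (show t ∈ {t : List Bool | t.length = s.length ∧ t ≠ s} from
        ⟨htlen, htne⟩) ⟨hyK, htmem⟩
    · rintro hy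
      simp only [Set.mem_iUnion, Set.mem_setOf_eq] at hy
      obtain ⟨t, ⟨htlen, htne⟩, hyK, hymem⟩ := hy
      refine ⟨hyK, ?_⟩
      rintro ⟨-, hys⟩
      exact (clT_disj T hTsub hTdisj htlen htne).ne_of_mem hymem hys rfl
  rw [heq]
  refine Set.Finite.isClosed_biUnion ?_ fun t _ => Fset_closed T t
  exact (List.finite_length_eq Bool s.length).subset fun t ht => ht.1

include hTsub in
lemma Fset_shrink [CompactSpace X] [T2Space X] (z : ℕ → Bool) {O : Set X} (hO : IsOpen O)
    (hPO : Pbr T z ⊆ O) : ∃ k, Fset T (strPre z k) ⊆ O := by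
  by_contra hc
  push_neg at hc
  have hne : ∀ k, (Fset T (strPre z k) \ O).Nonempty := by
    intro k
    rcases Set.not_subset.1 (hc k) with ⟨y, hy1, hy2⟩
    exact ⟨y, hy1, hy2⟩
  have hcl : ∀ k, IsClosed (Fset T (strPre z k) \ O) :=
    fun k => (Fset_closed T _).sdiff hO
  have := IsCompact.nonempty_iInter_of_directed_nonempty_isCompact_isClosed
    (fun k => Fset T (strPre z k) \ O) ?_ hne (fun k => (hcl k).isCompact) hcl
  · obtain ⟨y, hy⟩ := this
    have hyP : y ∈ Pbr T z := Set.mem_iInter.2 fun k =>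
      ((Set.mem_iInter.1 hy k).1).2
    exact ((Set.mem_iInter.1 hy 0).2) (hPO hyP)
  · intro i j
    exact ⟨max i j, Set.diff_subset_diff_left (Fset_antitone T hTsub z (le_max_left i j)),
      Set.diff_subset_diff_left (Fset_antitone T hTsub z (le_max_right i j))⟩

include hTne hTsub hTdisj in
lemma Fset_len_le [CompactSpace X] [T2Space X] {z z' : ℕ → Bool} {a b : ℕ}
    (h : Fset T (strPre z' a) ⊆ Fset T (strPre z b)) : b ≤ a := by
  by_contra hab
  push_neg at hab   -- a < b
  classical
  set w : ℕ → Bool := fun i => if i < a then z' i else !(z i) with hw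
  have hwa : strPre w a = strPre z' a := strPre_eq_iff.2 fun i hi => by simp [hw, hi]
  have hwb : strPre w b ≠ strPre z b := by
    intro hEq
    have := strPre_eq_iff.1 hEq a hab
    rw [hw] at this
    simp only [lt_irrefl, if_neg (lt_irrefl a)] at this
    cases z a <;> simp_all
  have h1 : Pbr T w ⊆ Fset T (strPre z b) := by
    have := Pbr_subset_F T hTsub w a
    rw [hwa] at this
    exact this.trans h
  have h2 : Pbr T w ⊆ closure (T (strPre w b)) := Pbr_subset_cl T w b
  have hdisj := clT_disj T hTsub hTdisj (by simp) hwb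
  obtain ⟨y, hy⟩ := Pbr_nonempty T hTne hTsub w
  exact hdisj.ne_of_mem (h2 hy) (h1 hy).2 rfl

end Tree



/-- condensation points -/
def CPset (X : Type*) [TopologicalSpace X] : Set X := {x | ∀ U ∈ nhds x, ¬ U.Countable}

lemma CP_nonempty [CompactSpace X] (h : ¬ Countable X) : (CPset X).Nonempty := by
  classical
  by_contra hc
  rw [Set.not_nonempty_iff_eq_empty] at hc
  have hU : ∀ x : X, ∃ U, U ∈ nhds x ∧ U.Countable := by
    intro x
    have : x ∉ CPset X := by rw [hc]; exact Set.notMem_empty x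
    simp only [CPset, Set.mem_setOf_eq, not_forall] at this
    obtain ⟨U, hU, hUc⟩ := this
    exact ⟨U, hU, by simpa using hUc⟩
  choose U hUn hUc using hU
  obtain ⟨t, -, ht⟩ := IsCompact.elim_nhds_subcover isCompact_univ U (fun x _ => hUn x)
  apply h
  rw [← Set.countable_univ_iff]
  exact (Set.Countable.biUnion t.countable_toSet fun x _ => hUc x).mono ht

lemma CP_acc [CompactSpace X] [T2Space X] [FirstCountableTopology X]
    {x : X} (hx : x ∈ CPset X) {U : Set X} (hU : U ∈ nhds x) :
    ∃ y, y ∈ CPset X ∩ U ∧ y ≠ x := by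
  classical
  by_contra hcon
  push_neg at hcon
  have hCPU : ∀ y ∈ CPset X ∩ U, y = x := fun y hy => by
    by_contra hne; exact hne (hcon y hy)
  obtain ⟨C₁, hC₁n, hC₁cl, hC₁sub⟩ := exists_mem_nhds_isClosed_subset hU
  obtain ⟨B, hB⟩ := (nhds x).exists_antitone_basis
  -- every point ≠ x of C₁ avoids some B k
  have hsep : ∀ y : X, y ≠ x → ∃ k, y ∉ B k := by
    intro y hy
    have : {y}ᶜ ∈ nhds x := compl_singleton_mem_nhds (Ne.symm hy)
    obtain ⟨k, hk⟩ := hB.mem_iff.1 this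
    exact ⟨k, fun hyB => hk hyB rfl⟩
  set D : ℕ → Set X := fun k => C₁ \ interior (B k) with hD
  have hDcl : ∀ k, IsClosed (D k) := fun k => hC₁cl.sdiff isOpen_interior
  have hDcount : ∀ k, (D k).Countable := by
    intro k
    have hsub : ∀ y ∈ D k, ∃ V, V ∈ nhds y ∧ V.Countable := by
      intro y hy
      have hyx : y ≠ x := by
        rintro rfl
        exact hy.2 (mem_interior_iff_mem_nhds.2 (hB.mem k))
      have hyU : y ∈ U := hC₁sub hy.1
      have : y ∉ CPset X := by
        intro hyCP
        exact hyx (hCPU y ⟨hyCP, hyU⟩)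
      simp only [CPset, Set.mem_setOf_eq, not_forall] at this
      obtain ⟨V, hV, hVc⟩ := this
      exact ⟨V, hV, by simpa using hVc⟩
    choose! V hVn hVc using hsub
    obtain ⟨t, htD, ht⟩ := IsCompact.elim_nhds_subcover ((hDcl k).isCompact) V hVn
    refine (Set.Countable.biUnion t.countable_toSet fun y hyt => ?_).mono ht
    exact hVc y (htD y hyt)
  have hC₁count : C₁.Countable := by
    have hsub : C₁ ⊆ {x} ∪ ⋃ k, D k := by
      intro y hy
      rcases Classical.em (y = x) with rfl | hyx
      · exact Or.inl rfl
      · obtain ⟨k, hk⟩ := hsep y hyx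
        exact Or.inr (Set.mem_iUnion.2 ⟨k, hy, fun hyint => hk (interior_subset hyint)⟩)
    exact ((Set.countable_singleton x).union (Set.countable_iUnion hDcount)).mono hsub
  exact hx C₁ hC₁n hC₁count

lemma CP_split [CompactSpace X] [T2Space X] [FirstCountableTopology X] :
    ∀ U : Set X, IsOpen U → (U ∩ CPset X).Nonempty →
    ∃ V₀ V₁ : Set X, (IsOpen V₀ ∧ (V₀ ∩ CPset X).Nonempty ∧ closure V₀ ⊆ U) ∧
      (IsOpen V₁ ∧ (V₁ ∩ CPset X).Nonempty ∧ closure V₁ ⊆ U) ∧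
      Disjoint (closure V₀) (closure V₁) := by
  intro U hUo ⟨x, hxU, hxCP⟩
  have hUx : U ∈ nhds x := hUo.mem_nhds hxU
  obtain ⟨y, ⟨hyCP, hyU⟩, hyx⟩ := CP_acc hxCP hUx
  obtain ⟨W₀, W₁, hW₀, hW₁, hxW₀, hyW₁, hWd⟩ := t2_separation (Ne.symm hyx)
  obtain ⟨C₀, hC₀n, hC₀cl, hC₀sub⟩ := exists_mem_nhds_isClosed_subset
    (Filter.inter_mem (hW₀.mem_nhds hxW₀) hUx)
  obtain ⟨C₁, hC₁n, hC₁cl, hC₁sub⟩ := exists_mem_nhds_isClosed_subset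
    (Filter.inter_mem (hW₁.mem_nhds (hyW₁)) (hUo.mem_nhds hyU))
  refine ⟨interior C₀, interior C₁, ⟨isOpen_interior, ⟨x, mem_interior_iff_mem_nhds.2 hC₀n, hxCP⟩,
      ?_⟩, ⟨isOpen_interior, ⟨y, mem_interior_iff_mem_nhds.2 hC₁n, hyCP⟩, ?_⟩, ?_⟩
  · exact (closure_minimal interior_subset hC₀cl).trans (hC₀sub.trans Set.inter_subset_right)
  · exact (closure_minimal interior_subset hC₁cl).trans (hC₁sub.trans Set.inter_subset_right)
  · refine hWd.mono ?_ ?_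
    · exact (closure_minimal interior_subset hC₀cl).trans (hC₀sub.trans Set.inter_subset_left)
    · exact (closure_minimal interior_subset hC₁cl).trans (hC₁sub.trans Set.inter_subset_left)

/-! ### the combinatorial function on the Cantor set -/

open Classical in
/-- position of the last `true`, when there are finitely many -/
noncomputable def nfun (z : ℕ → Bool) : ℕ :=
  if h : ∃ B, ∀ k, z k = true → k ≤ B then Nat.find h else 0

lemma nfun_unbounded (z : ℕ → Bool) (k c : ℕ) :
    ∃ z' : ℕ → Bool, (∀ i < k, z' i = z i) ∧ c ≤ nfun z' := by
  classical
  set j := max k c with hj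
  let z' : ℕ → Bool := fun i => if i < k then z i else decide (i = j)
  have hz'def : ∀ i, z' i = if i < k then z i else decide (i = j) := fun _ => rfl
  have hbdd : ∃ B, ∀ i, z' i = true → i ≤ B := by
    refine ⟨j, fun i hi => ?_⟩
    rw [hz'def i] at hi
    by_cases hik : i < k
    · rw [if_pos hik] at hi
      exact le_trans (le_of_lt hik) (le_max_left k c)
    · rw [if_neg hik] at hi
      exact le_of_eq (of_decide_eq_true hi)
  have hzj : z' j = true := by
    rw [hz'def j]
    have : ¬ j < k := not_lt.2 (le_max_left k c)
    rw [if_neg this]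
    simp
  have hfind : nfun z' = Nat.find hbdd := by
    unfold nfun
    rw [dif_pos hbdd]
  refine ⟨z', fun i hi => by rw [hz'def i, if_pos hi], ?_⟩
  rw [hfind]
  exact le_trans (le_max_right k c) (Nat.find_spec hbdd j hzj)

/-- The key combinatorial lemma: no "monotone resolution" function `m` is compatible
with an everywhere-unbounded `n`. -/
lemma comb_lemma (m : (ℕ → Bool) → ℕ)
    (hm : ∀ z z', (∀ i < m z, z' i = z i) → nfun z ≤ m z') : False := by
  classical
  have hma : ∀ z, nfun z ≤ m z := fun z => hm z z (fun i _ => rfl)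
  have hstep : ∀ p : (ℕ → Bool) × ℕ, ∀ c : ℕ,
      ∃ z', (∀ i < p.2, z' i = p.1 i) ∧ c ≤ nfun z' := fun p c => nfun_unbounded p.1 p.2 c
  choose step hstep1 hstep2 using hstep
  set q : ℕ → (ℕ → Bool) × ℕ := fun j => Nat.rec ((fun _ => false), 0)
    (fun j p => (step p (j + 1), max p.2 (m (step p (j + 1))))) j with hq
  have hqs : ∀ j, q (j + 1) = (step (q j) (j + 1), max (q j).2 (m (step (q j) (j + 1)))) :=
    fun j => rfl
  -- basic facts
  have hℓ_mono : ∀ j, (q j).2 ≤ (q (j + 1)).2 := by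
    intro j; rw [hqs j]; exact le_max_left _ _
  have hℓ_le : ∀ {j j'}, j ≤ j' → (q j).2 ≤ (q j').2 := by
    intro j j' h
    induction j' with
    | zero => simp [Nat.le_zero.1 h]
    | succ j' ih =>
      rcases Nat.lt_or_ge j (j' + 1) with h' | h'
      · exact (ih (Nat.lt_succ_iff.1 h')).trans (hℓ_mono j')
      · rw [le_antisymm h h']
  have hm_le : ∀ j, m (q (j + 1)).1 ≤ (q (j + 1)).2 := by
    intro j; rw [hqs j]; exact le_max_right _ _
  have hn_ge : ∀ j, j + 1 ≤ nfun (q (j + 1)).1 := by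
    intro j; rw [hqs j]; exact hstep2 (q j) (j + 1)
  have hagree1 : ∀ j, ∀ i < (q j).2, (q (j + 1)).1 i = (q j).1 i := by
    intro j i hi; rw [hqs j]; exact hstep1 (q j) (j + 1) i hi
  have hagree : ∀ j j', j ≤ j' → ∀ i < (q j).2, (q j').1 i = (q j).1 i := by
    intro j j' h
    induction j' with
    | zero => rw [Nat.le_zero.1 h]; intro i _; rfl
    | succ j' ih =>
      rcases Nat.lt_or_ge j (j' + 1) with h' | h'
      · intro i hi
        have h1 := ih (Nat.lt_succ_iff.1 h') i hi
        have h2 := hagree1 j' i (lt_of_lt_of_le hi (hℓ_le (Nat.lt_succ_iff.1 h')))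
        rw [h2, h1]
      · rw [le_antisymm h h']; intro i _; rfl
  have hℓ_big : ∀ j, j + 1 ≤ (q (j + 1)).2 :=
    fun j => (hn_ge j).trans ((hma _).trans (hm_le j))
  set p : ℕ → Bool := fun i => (q (i + 1)).1 i with hp
  have hpa : ∀ j, ∀ i < (q j).2, p i = (q j).1 i := by
    intro j i hi
    rcases le_total j (i + 1) with h | h
    · rw [hp]; exact hagree j (i + 1) h i hi
    · rw [hp]
      exact (hagree (i + 1) j h i (lt_of_lt_of_le (Nat.lt_succ_self i) (hℓ_big i))).symm
  have hfinal : ∀ j, j + 1 ≤ m p := by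
    intro j
    refine le_trans (hn_ge j) (hm (q (j + 1)).1 p ?_)
    intro i hi
    exact hpa (j + 1) i (lt_of_lt_of_le hi (hm_le j))
  exact absurd (hfinal (m p)) (by omega)


theorem partB [CompactSpace X] [T2Space X] [FirstCountableTopology X]
    (hP : ∀ N : X → Set X, (∀ x, N x ∈ nhds x) →
      ∃ M : X → Set X, (∀ x, M x ∈ nhds x) ∧ ∀ x, ∀ y ∈ M x, M y ⊆ N x) :
    Countable X := by
  classical
  by_contra hX
  have CPne : (CPset X).Nonempty := CP_nonempty hX
  have hsp := CP_split (X := X)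
  choose! V₀ V₁ hprop using hsp
  have h0o : ∀ U, IsOpen U → (U ∩ CPset X).Nonempty → IsOpen (V₀ U) :=
    fun U h1 h2 => (hprop U h1 h2).1.1
  have h0n : ∀ U, IsOpen U → (U ∩ CPset X).Nonempty → (V₀ U ∩ CPset X).Nonempty :=
    fun U h1 h2 => (hprop U h1 h2).1.2.1
  have h0c : ∀ U, IsOpen U → (U ∩ CPset X).Nonempty → closure (V₀ U) ⊆ U :=
    fun U h1 h2 => (hprop U h1 h2).1.2.2
  have h1o : ∀ U, IsOpen U → (U ∩ CPset X).Nonempty → IsOpen (V₁ U) :=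
    fun U h1 h2 => (hprop U h1 h2).2.1.1
  have h1n : ∀ U, IsOpen U → (U ∩ CPset X).Nonempty → (V₁ U ∩ CPset X).Nonempty :=
    fun U h1 h2 => (hprop U h1 h2).2.1.2.1
  have h1c : ∀ U, IsOpen U → (U ∩ CPset X).Nonempty → closure (V₁ U) ⊆ U :=
    fun U h1 h2 => (hprop U h1 h2).2.1.2.2
  have hd : ∀ U, IsOpen U → (U ∩ CPset X).Nonempty →
      Disjoint (closure (V₀ U)) (closure (V₁ U)) :=
    fun U h1 h2 => (hprop U h1 h2).2.2
  set T : List Bool → Set X := treeAux V₀ V₁ with hT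
  have hTeq : ∀ (b : Bool) (s : List Bool),
      T (b :: s) = if b then V₀ (T s) else V₁ (T s) := fun b s => rfl
  have hGood : ∀ s, IsOpen (T s) ∧ (T s ∩ CPset X).Nonempty := by
    intro s
    induction s with
    | nil =>
      refine ⟨isOpen_univ, ?_⟩
      rw [show T [] = Set.univ from rfl, Set.univ_inter]
      exact CPne
    | cons b s ih =>
      cases b
      · rw [hTeq false s, if_neg (by simp)]
        exact ⟨h1o (T s) ih.1 ih.2, h1n (T s) ih.1 ih.2⟩
      · rw [hTeq true s, if_pos rfl]
        exact ⟨h0o (T s) ih.1 ih.2, h0n (T s) ih.1 ih.2⟩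
  have hTne : ∀ s, (T s).Nonempty := fun s => ((hGood s).2).mono Set.inter_subset_left
  have hTsub : ∀ s b, closure (T (b :: s)) ⊆ T s := by
    intro s b
    cases b
    · rw [hTeq false s, if_neg (by simp)]
      exact h1c (T s) (hGood s).1 (hGood s).2
    · rw [hTeq true s, if_pos rfl]
      exact h0c (T s) (hGood s).1 (hGood s).2
  have hTdisj : ∀ s, Disjoint (closure (T (true :: s))) (closure (T (false :: s))) := by
    intro s
    rw [hTeq true s, if_pos rfl, hTeq false s, if_neg (by simp)]
    exact hd (T s) (hGood s).1 (hGood s).2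
  -- the branch map
  have hbr : ∀ x, x ∈ Kset T → ∃ z, x ∈ Pbr T z :=
    fun x hx => exists_branch T hTsub hTdisj hx
  set ζ : X → (ℕ → Bool) :=
    fun x => if h : ∃ z, x ∈ Pbr T z then h.choose else fun _ => false with hζ
  have hζdef : ∀ x, ζ x = if h : ∃ z, x ∈ Pbr T z then h.choose else fun _ => false :=
    fun _ => rfl
  have hζ2 : ∀ x, x ∈ Kset T → x ∈ Pbr T (ζ x) := by
    intro x hx
    rw [hζdef x, dif_pos (hbr x hx)]
    exact (hbr x hx).choose_spec
  -- the adversarial neighborhood assignment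
  set N : X → Set X := fun x => if x ∈ Kset T then
      (Kset T \ Fset T (strPre (ζ x) (nfun (ζ x))))ᶜ else (Kset T)ᶜ with hN
  have hNdef : ∀ x, N x = if x ∈ Kset T then
      (Kset T \ Fset T (strPre (ζ x) (nfun (ζ x))))ᶜ else (Kset T)ᶜ := fun _ => rfl
  have hNn : ∀ x, N x ∈ nhds x := by
    intro x
    by_cases hx : x ∈ Kset T
    · rw [hNdef x, if_pos hx]
      refine ((Kdiff_closed T hTsub hTdisj _).isOpen_compl).mem_nhds ?_
      intro hmem
      exact hmem.2 (Pbr_subset_F T hTsub (ζ x) _ (hζ2 x hx))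
    · rw [hNdef x, if_neg hx]
      exact ((Kset_closed T).isOpen_compl).mem_nhds hx
  obtain ⟨M, hMn, hMsq⟩ := hP N hNn
  -- finite subcovers of the branch fibers
  have hPbrC : ∀ z : ℕ → Bool, IsCompact (Pbr T z) :=
    fun z => (isClosed_iInter fun k => isClosed_closure).isCompact
  have hcov : ∀ z : ℕ → Bool, ∃ t : Finset X, (∀ x ∈ t, x ∈ Pbr T z) ∧
      Pbr T z ⊆ ⋃ x ∈ t, interior (M x) :=
    fun z => (hPbrC z).elim_nhds_subcover (fun x => interior (M x))
      (fun x _ => interior_mem_nhds.2 (hMn x))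
  choose G hG1 hG2 using hcov
  have hshr : ∀ z : ℕ → Bool, ∃ k, Fset T (strPre z k) ⊆ ⋃ x ∈ G z, interior (M x) :=
    fun z => Fset_shrink T hTsub z (isOpen_biUnion fun _ _ => isOpen_interior) (hG2 z)
  choose n₁ hn₁ using hshr
  set m : (ℕ → Bool) → ℕ := fun z => max (n₁ z) (nfun z) with hm
  have hmdef : ∀ z, m z = max (n₁ z) (nfun z) := fun _ => rfl
  -- the key property of m
  have key : ∀ z z', (∀ i < m z, z' i = z i) → nfun z ≤ m z' := by
    intro z z' hagr
    refine Fset_len_le T hTne hTsub hTdisj (z := z) (z' := z') (a := m z') (b := nfun z) ?_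
    intro y hy
    have hy1 : y ∈ ⋃ x ∈ G z', interior (M x) :=
      hn₁ z' (Fset_antitone T hTsub z' (le_max_left _ _) hy)
    simp only [Set.mem_iUnion] at hy1
    obtain ⟨x', hx'G, hyx'⟩ := hy1
    have hx'P : x' ∈ Pbr T z' := hG1 z' x' hx'G
    have hx'F : x' ∈ Fset T (strPre z (n₁ z)) := by
      have h1 := Pbr_subset_F T hTsub z' (n₁ z) hx'P
      have heq : strPre z' (n₁ z) = strPre z (n₁ z) :=
        strPre_eq_iff.2 fun i hi => hagr i (lt_of_lt_of_le hi (le_max_left _ _))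
      rwa [heq] at h1
    have hx'O : x' ∈ ⋃ x ∈ G z, interior (M x) := hn₁ z hx'F
    simp only [Set.mem_iUnion] at hx'O
    obtain ⟨x'', hx''G, hx'x''⟩ := hx'O
    have hyN : y ∈ N x'' := hMsq x'' x' (interior_subset hx'x'') (interior_subset hyx')
    have hx''P : x'' ∈ Pbr T z := hG1 z x'' hx''G
    have hx''K : x'' ∈ Kset T := Pbr_subset_K T hTsub z hx''P
    have hζx'' : ζ x'' = z := by
      by_contra hne
      exact (Pbr_disjoint T hTsub hTdisj hne).ne_of_mem (hζ2 x'' hx''K) hx''P rfl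
    rw [hNdef x'', if_pos hx''K, hζx''] at hyN
    have hyK : y ∈ Kset T := (Fset_subset_K T _) hy
    rcases Classical.em (y ∈ Fset T (strPre z (nfun z))) with h | h
    · exact h
    · exact absurd ⟨hyK, h⟩ hyN
  exact comb_lemma m key

end NbhdSq

/-- For a compact first-countable Hausdorff space `X`, every neighborhood assignment admits a
square-refining neighborhood assignment iff `X` is countable. -/
theorem compact_firstCountable_refinement_iff_countable {X : Type*} [TopologicalSpace X]
    [CompactSpace X] [T2Space X] [FirstCountableTopology X] :
    (∀ N : X → Set X, (∀ x, N x ∈ nhds x) →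
      ∃ M : X → Set X, (∀ x, M x ∈ nhds x) ∧ ∀ x, ∀ y ∈ M x, M y ⊆ N x) ↔
      Countable X := by
  constructor
  · exact NbhdSq.partB
  · intro hC
    haveI := hC
    exact NbhdSq.partA
end

section
/- Let f : X → Y be a closed continuous surjection between topological spaces. If X is a Fréchet–Urysohn space, then Y is a Fréchet–Urysohn space. -/
/-- A closed continuous surjective image of a Fréchet–Urysohn space is Fréchet–Urysohn. -/
theorem frechetUrysohn_of_closedMap {X Y : Type*} [TopologicalSpace X] [TopologicalSpace Y]
    [FrechetUrysohnSpace X] (f : X → Y) (hc : Continuous f) (hcl : IsClosedMap f)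
    (hs : Function.Surjective f) : FrechetUrysohnSpace Y := by
  constructor
  intro A y hy
  -- y ∈ f '' closure (f ⁻¹' A)
  have hclosed : IsClosed (f '' closure (f ⁻¹' A)) := hcl _ isClosed_closure
  have hA : A ⊆ f '' closure (f ⁻¹' A) := by
    intro a ha
    obtain ⟨x, rfl⟩ := hs a
    exact ⟨x, subset_closure ha, rfl⟩
  have hy' : y ∈ f '' closure (f ⁻¹' A) := hclosed.closure_subset (closure_mono hA hy)
  obtain ⟨x, hx, rfl⟩ := hy'
  obtain ⟨u, hu, hux⟩ := mem_closure_iff_seq_limit.mp hx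
  exact ⟨f ∘ u, fun n => hu n, (hc.tendsto x).comp hux⟩
end

section
/- Let X be a T1-space and let F be the free group on the underlying set of X. Define i_n : (X ⊕ X⁻¹ ⊕ {e})^n → F by multiplication of coordinates. For n ≥ 3, let A = {(x, x, x⁻¹, e, …, e) : x ∈ X \ {x₀}} for a fixed non-isolated point x₀ ∈ X. Then A is a closed discrete subset of (X ⊕ (X⁻¹ with discrete topology) ⊕ {e})^n, while i_n(A) = X \ {x₀} is not closed in X (its closure contains x₀). -/
/-- The letter space `X ⊕ X⁻¹ ⊕ {e}`, with `X` in its given topology, the copy of inverses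
discrete, and the extra identity point. -/
def letterTop (X : Type*) (t : TopologicalSpace X) : TopologicalSpace (X ⊕ X ⊕ Unit) :=
  @instTopologicalSpaceSum X (X ⊕ Unit) t (@instTopologicalSpaceSum X Unit ⊥ ⊥)

/-- Interpretation of a letter in the free group on `X`: `x ↦ x`, an inverse letter
`x⁻¹ ↦ (x)⁻¹`, and `e ↦ 1`. -/
def letterVal {X : Type*} : X ⊕ X ⊕ Unit → FreeGroup X :=
  Sum.elim FreeGroup.of (Sum.elim (fun x => (FreeGroup.of x)⁻¹) (fun _ => 1))

/-- The multiplication map `i_n : (X ⊕ X⁻¹ ⊕ {e})ⁿ → F(X)`. -/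
def iMap {X : Type*} (n : ℕ) (v : Fin n → X ⊕ X ⊕ Unit) : FreeGroup X :=
  (List.ofFn fun j => letterVal (v j)).prod

private lemma sumBot_isOpen {α β : Type*} (u : Set (α ⊕ β)) :
    @IsOpen _ (@instTopologicalSpaceSum α β ⊥ ⊥) u := by
  letI : TopologicalSpace α := ⊥
  letI : TopologicalSpace β := ⊥
  haveI : DiscreteTopology α := ⟨rfl⟩
  haveI : DiscreteTopology β := ⟨rfl⟩
  exact isOpen_discrete u

private lemma letter_isOpen {X : Type*} (t : TopologicalSpace X) {s : Set X} (hs : IsOpen s)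
    (u : Set (X ⊕ Unit)) :
    @IsOpen _ (letterTop X t) (Sum.inl '' s ∪ Sum.inr '' u) := by
  rw [letterTop, @isOpen_sum_iff X (X ⊕ Unit) t (@instTopologicalSpaceSum X Unit ⊥ ⊥)]
  constructor
  · have h : Sum.inl ⁻¹' (Sum.inl '' s ∪ Sum.inr '' u) = s := by
      ext y; simp
    rw [h]; exact hs
  · exact sumBot_isOpen _

private lemma letter_isOpen_inr {X : Type*} (t : TopologicalSpace X) (u : Set (X ⊕ Unit)) :
    @IsOpen _ (letterTop X t) (Sum.inr '' u) := by
  have h := letter_isOpen t isOpen_empty u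
  simpa using h

private lemma letter_compl_singleton {X : Type*} (t : TopologicalSpace X) [@T1Space X t]
    (c : X ⊕ X ⊕ Unit) : @IsOpen _ (letterTop X t) {c}ᶜ := by
  cases c with
  | inl x =>
    have h : ({Sum.inl x}ᶜ : Set (X ⊕ X ⊕ Unit)) =
        Sum.inl '' {x}ᶜ ∪ Sum.inr '' Set.univ := by
      ext y; cases y <;> simp [eq_comm, Ne, Sum.inl.injEq, not_iff_not]
    rw [h]
    exact letter_isOpen t isOpen_compl_singleton _
  | inr u =>
    have h : ({Sum.inr u}ᶜ : Set (X ⊕ X ⊕ Unit)) =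
        Sum.inl '' Set.univ ∪ Sum.inr '' {u}ᶜ := by
      ext y; cases y <;> simp [eq_comm]
    rw [h]
    exact letter_isOpen t isOpen_univ _

private lemma letter_notinv_isOpen {X : Type*} (t : TopologicalSpace X) :
    @IsOpen _ (letterTop X t)
      {y : X ⊕ X ⊕ Unit | ∀ x : X, y ≠ Sum.inr (Sum.inl x)} := by
  have h : {y : X ⊕ X ⊕ Unit | ∀ x : X, y ≠ Sum.inr (Sum.inl x)} =
      Sum.inl '' Set.univ ∪ Sum.inr '' (Set.range Sum.inr) := by
    ext y
    rcases y with y | y | u <;> simp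
  rw [h]
  exact letter_isOpen t isOpen_univ _

private lemma prod_aux {G : Type*} [Group G] {m : ℕ} (f : Fin (m + 3) → G)
    (hf : ∀ j : Fin (m + 3), 3 ≤ (j : ℕ) → f j = 1) :
    (List.ofFn f).prod = f ⟨0, by omega⟩ * f ⟨1, by omega⟩ * f ⟨2, by omega⟩ := by
  rw [List.ofFn_succ, List.ofFn_succ, List.ofFn_succ, List.prod_cons, List.prod_cons,
    List.prod_cons]
  have h1 : (List.ofFn fun i : Fin m => f i.succ.succ.succ).prod = 1 := by
    apply List.prod_eq_one
    intro x hx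
    rw [List.mem_ofFn] at hx
    obtain ⟨i, rfl⟩ := hx
    exact hf _ (by simp)
  rw [h1, mul_one]
  have e0 : (0 : Fin (m + 3)) = ⟨0, by omega⟩ := rfl
  have e1 : ((0 : Fin (m + 2)).succ : Fin (m + 3)) = ⟨1, by omega⟩ := by
    apply Fin.ext; simp
  have e2 : ((0 : Fin (m + 1)).succ.succ : Fin (m + 3)) = ⟨2, by omega⟩ := by
    apply Fin.ext; simp
  rw [e0, e1, e2, mul_assoc]

private lemma iMap_a {X : Type*} (x : X) (m : ℕ) :
    iMap (m + 3) (fun j : Fin (m + 3) =>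
      if (j : ℕ) = 0 ∨ (j : ℕ) = 1 then Sum.inl x
      else if (j : ℕ) = 2 then Sum.inr (Sum.inl x) else Sum.inr (Sum.inr ())) =
    FreeGroup.of x := by
  rw [iMap, prod_aux]
  · simp only
    norm_num
    simp [letterVal, mul_inv_cancel_right]
  · intro j hj
    have h0 : ¬((j : ℕ) = 0 ∨ (j : ℕ) = 1) := by omega
    have h2 : ¬(j : ℕ) = 2 := by omega
    have h0' : ¬(j = 0 ∨ (j : ℕ) = 1) := fun h => h0 (h.imp (fun e => by simp [e]) id)
    simp [h0, h0', h2, letterVal]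

/-- For a T1 space `X` with a non-isolated point `x₀` and `n ≥ 3`, the set
`A = {(x, x, x⁻¹, e, …, e) : x ∈ X \ {x₀}}` is a closed discrete subset of
`(X ⊕ X⁻¹_d ⊕ {e})ⁿ`, yet `i_n(A) = X \ {x₀}`, whose closure in `X` contains `x₀`,
so it is not closed. -/
theorem closed_discrete_but_image_not_closed {X : Type*} [t : TopologicalSpace X] [T1Space X]
    {n : ℕ} (hn : 3 ≤ n) (x₀ : X) (hx₀ : x₀ ∈ closure {x : X | x ≠ x₀}) :
    let tP : TopologicalSpace (Fin n → X ⊕ X ⊕ Unit) :=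
      @Pi.topologicalSpace (Fin n) (fun _ => X ⊕ X ⊕ Unit) (fun _ => letterTop X t)
    let A : Set (Fin n → X ⊕ X ⊕ Unit) :=
      {v | ∃ x : X, x ≠ x₀ ∧ v = fun j : Fin n =>
        if (j : ℕ) = 0 ∨ (j : ℕ) = 1 then Sum.inl x
        else if (j : ℕ) = 2 then Sum.inr (Sum.inl x) else Sum.inr (Sum.inr ())}
    @IsClosed _ tP A ∧
      (∀ a ∈ A, ∃ U : Set (Fin n → X ⊕ X ⊕ Unit), @IsOpen _ tP U ∧ U ∩ A = {a}) ∧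
      iMap n '' A = FreeGroup.of '' {x : X | x ≠ x₀} ∧
      ¬ IsClosed {x : X | x ≠ x₀} := by
  obtain ⟨m, rfl⟩ : ∃ m, n = m + 3 := ⟨n - 3, by omega⟩
  letI tY : TopologicalSpace (X ⊕ X ⊕ Unit) := letterTop X t
  intro tP A
  set a : X → (Fin (m + 3) → X ⊕ X ⊕ Unit) := fun x => fun j : Fin (m + 3) =>
    if (j : ℕ) = 0 ∨ (j : ℕ) = 1 then Sum.inl x
    else if (j : ℕ) = 2 then Sum.inr (Sum.inl x) else Sum.inr (Sum.inr ()) with ha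
  have amem : ∀ w, w ∈ A ↔ ∃ x : X, x ≠ x₀ ∧ w = a x := fun _ => Iff.rfl
  set j2 : Fin (m + 3) := ⟨2, by omega⟩ with hj2
  have haj2 : ∀ x : X, a x j2 = Sum.inr (Sum.inl x) := by
    intro x; simp [ha, hj2]
  have hfiber : ∀ (j : Fin (m + 3)) (W : Set (X ⊕ X ⊕ Unit)), IsOpen W →
      @IsOpen _ tP {w : Fin (m + 3) → X ⊕ X ⊕ Unit | w j ∈ W} := by
    intro j W hW
    exact hW.preimage (continuous_apply j)
  refine ⟨?_, ?_, ?_, ?_⟩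
  · -- A is closed
    rw [← isOpen_compl_iff, isOpen_iff_forall_mem_open]
    intro v hv
    rcases hv2 : v j2 with y | y | u
    · -- v j2 = inl y : no inverse letter at slot 2
      refine ⟨{w | w j2 ∈ {z : X ⊕ X ⊕ Unit | ∀ x : X, z ≠ Sum.inr (Sum.inl x)}},
        ?_, hfiber _ _ (letter_notinv_isOpen t), by simp [hv2]⟩
      rintro w hw ⟨x, hx, rfl⟩
      exact hw x (haj2 x)
    · -- v j2 = inr (inl y)
      by_cases hy : y = x₀
      · refine ⟨{w | w j2 ∈ Sum.inr '' {Sum.inl y}}, ?_,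
          hfiber _ _ (letter_isOpen_inr t _), by simp [hv2]⟩
        intro w hw hwA
        obtain ⟨x, hx, rfl⟩ := (amem w).1 hwA
        simp only [Set.mem_setOf_eq, haj2, Set.image_singleton, Set.mem_singleton_iff,
          Sum.inr.injEq, Sum.inl.injEq] at hw
        exact hx (hw.trans hy)
      · have hvne : v ≠ a y := fun h => hv ⟨y, hy, h⟩
        obtain ⟨j, hj⟩ : ∃ j, v j ≠ a y j := by
          by_contra h
          push_neg at h
          exact hvne (funext h)
        refine ⟨{w | w j2 ∈ Sum.inr '' {Sum.inl y}} ∩ {w | w j ∈ {a y j}ᶜ}, ?_,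
          (hfiber _ _ (letter_isOpen_inr t _)).inter
            (hfiber _ _ (letter_compl_singleton t _)), by simp [hv2, hj]⟩
        rintro w ⟨hw2, hwj⟩ hwA
        obtain ⟨x, hx, rfl⟩ := (amem w).1 hwA
        simp only [Set.mem_setOf_eq, haj2, Set.image_singleton, Set.mem_singleton_iff,
          Sum.inr.injEq, Sum.inl.injEq] at hw2
        subst hw2
        exact hwj rfl
    · -- v j2 = inr (inr u)
      refine ⟨{w | w j2 ∈ {z : X ⊕ X ⊕ Unit | ∀ x : X, z ≠ Sum.inr (Sum.inl x)}},
        ?_, hfiber _ _ (letter_notinv_isOpen t), by simp [hv2]⟩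
      rintro w hw ⟨x, hx, rfl⟩
      exact hw x (haj2 x)
  · -- discreteness
    intro w hw
    obtain ⟨x, hx, rfl⟩ := (amem w).1 hw
    refine ⟨{w | w j2 ∈ Sum.inr '' {Sum.inl x}}, hfiber _ _ (letter_isOpen_inr t _), ?_⟩
    ext w'
    simp only [Set.mem_inter_iff, Set.mem_setOf_eq, Set.image_singleton,
      Set.mem_singleton_iff]
    constructor
    · rintro ⟨hw2, hwA⟩
      obtain ⟨x', hx', rfl⟩ := (amem w').1 hwA
      rw [haj2] at hw2
      obtain rfl : x' = x := Sum.inl.inj (Sum.inr.inj hw2)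
      rfl
    · rintro rfl
      exact ⟨by rw [haj2], (amem _).2 ⟨x, hx, rfl⟩⟩
  · -- image
    ext g
    constructor
    · rintro ⟨v, hvA, rfl⟩
      obtain ⟨x, hx, rfl⟩ := (amem v).1 hvA
      exact ⟨x, hx, (iMap_a x m).symm⟩
    · rintro ⟨x, hx, rfl⟩
      exact ⟨a x, (amem _).2 ⟨x, hx, rfl⟩, iMap_a x m⟩
  · -- not closed
    intro h
    rw [h.closure_eq] at hx₀
    exact hx₀ rfl
end

section
/- Let X be a topological space and suppose the finest compatible quasi-uniformity 𝒰* on X consists of all neighborhoods of the diagonal Δ₁ in X_d × X. Then X satisfies: every neighborhood assignment (N_x) admits a quasi-pseudometric d with each d(x,·) upper semi-continuous and B_d(x,1) ⊆ N_x; conversely, this quasi-pseudometric condition implies every neighborhood of Δ₁ in X_d × X belongs to 𝒰*. -/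
/-- The quasi-pseudometric condition: every neighborhood assignment `N` admits a
quasi-pseudometric `d` with each `d x ·` upper semi-continuous and `B_d(x,1) ⊆ N x`. -/
def QPMCond (X : Type*) [TopologicalSpace X] : Prop :=
  ∀ N : X → Set X, (∀ x, N x ∈ nhds x) →
    ∃ d : X → X → ℝ, (∀ x y, 0 ≤ d x y) ∧ (∀ x, d x x = 0) ∧
      (∀ x y z, d x z ≤ d x y + d y z) ∧
      (∀ x, UpperSemicontinuous (d x)) ∧
      (∀ x, {y | d x y < 1} ⊆ N x)

open Finset
open scoped Classical

namespace EN

variable {X : Type*}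

section Frink

variable (U : ℕ → Set (X × X))

noncomputable def fF (a b : X) : ℝ :=
  if h : ∃ n, (a, b) ∉ U n then 2 * (2:ℝ)⁻¹ ^ Nat.find h else 0

variable {U}

lemma fF_nonneg (a b : X) : 0 ≤ fF U a b := by
  unfold fF; split <;> positivity

lemma fF_le_two (a b : X) : fF U a b ≤ 2 := by
  unfold fF; split
  · rename_i h
    have h1 : (2:ℝ)⁻¹ ^ (Nat.find h) ≤ 1 := pow_le_one₀ (by norm_num) (by norm_num)
    nlinarith
  · norm_num

lemma fF_self (hrefl : ∀ n (x : X), (x, x) ∈ U n) (a : X) : fF U a a = 0 := by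
  unfold fF
  rw [dif_neg]
  push_neg
  exact fun n => hrefl n a

variable (hmono : ∀ n, U (n + 1) ⊆ U n)
include hmono

lemma Umono {n m : ℕ} (h : n ≤ m) : U m ⊆ U n := by
  induction h with
  | refl => exact subset_rfl
  | step _ ih => exact (hmono _).trans ih

lemma fF_le_iff {a b : X} {n : ℕ} : (a, b) ∈ U n ↔ fF U a b ≤ (2:ℝ)⁻¹ ^ n := by
  unfold fF
  split
  · rename_i h
    constructor
    · intro hm
      have hfind : n < Nat.find h := by
        rw [Nat.lt_find_iff]
        intro k hk hnot
        exact hnot (Umono hmono hk hm)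
      have h1 : (2:ℝ)⁻¹ ^ (Nat.find h) ≤ (2:ℝ)⁻¹ ^ (n+1) :=
        pow_le_pow_of_le_one (by norm_num) (by norm_num) hfind
      have h2 : ((2:ℝ)⁻¹) ^ (n+1) * 2 = (2:ℝ)⁻¹ ^ n := by
        rw [pow_succ]; ring
      nlinarith
    · intro hle
      by_contra hnot
      have hfle : Nat.find h ≤ n := Nat.find_le hnot
      have h1 : ((2:ℝ)⁻¹) ^ n ≤ (2:ℝ)⁻¹ ^ (Nat.find h) :=
        pow_le_pow_of_le_one (by norm_num) (by norm_num) hfle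
      have h2 : (0:ℝ) < (2:ℝ)⁻¹ ^ n := by positivity
      nlinarith
  · rename_i h
    push_neg at h
    refine ⟨fun _ => by positivity, fun _ => h n⟩

lemma mem_of_fF_lt {a b : X} {n : ℕ} (h : fF U a b < (2:ℝ)⁻¹ ^ n) : (a, b) ∈ U (n + 1) := by
  rw [fF_le_iff hmono]
  unfold fF at h ⊢
  split at h
  · rename_i hex
    rw [dif_pos hex]
    · have hm : n + 2 ≤ Nat.find hex := by
        by_contra hc
        push_neg at hc
        have h1 : (2:ℝ)⁻¹ ^ (n+1) ≤ (2:ℝ)⁻¹ ^ (Nat.find hex) :=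
          pow_le_pow_of_le_one (by norm_num) (by norm_num) (by omega)
        have h2 : ((2:ℝ)⁻¹) ^ (n+1) * 2 = (2:ℝ)⁻¹ ^ n := by rw [pow_succ]; ring
        nlinarith
      have h1 : (2:ℝ)⁻¹ ^ (Nat.find hex) ≤ (2:ℝ)⁻¹ ^ (n+2) :=
        pow_le_pow_of_le_one (by norm_num) (by norm_num) hm
      have h2 : ((2:ℝ)⁻¹ : ℝ) ^ (n+2) * 2 = (2:ℝ)⁻¹ ^ (n+1) := by rw [pow_succ]; ring
      nlinarith
  · rename_i hex
    rw [dif_neg hex]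
    positivity

omit hmono in
lemma mem_zero_of_fF_lt_two {a b : X} (h : fF U a b < 2) : (a, b) ∈ U 0 := by
  unfold fF at h
  split at h
  · rename_i hex
    have hpos : 0 < Nat.find hex := by
      rcases Nat.eq_zero_or_pos (Nat.find hex) with h0 | h0
      · rw [h0] at h; norm_num at h
      · exact h0
    have := Nat.find_min hex hpos
    simpa using this
  · rename_i hex
    push_neg at hex
    exact hex 0

lemma fF_chain (hrefl : ∀ n (x : X), (x, x) ∈ U n)
    (htriple : ∀ n (a b c e : X), (a, b) ∈ U (n+1) → (b, c) ∈ U (n+1) → (c, e) ∈ U (n+1) →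
      (a, e) ∈ U n)
    (k : ℕ) : ∀ g : ℕ → X,
      fF U (g 0) (g k) ≤ 2 * ∑ i ∈ Finset.range k, fF U (g i) (g (i + 1)) := by
  induction k using Nat.strong_induction_on with
  | _ k ih =>
  intro g
  match k with
  | 0 => simp [fF_self hrefl]
  | (k' + 1) =>
  set S := ∑ i ∈ Finset.range (k' + 1), fF U (g i) (g (i + 1)) with hSdef
  have hS0 : 0 ≤ S := Finset.sum_nonneg fun i _ => fF_nonneg _ _
  by_cases h1 : 1 ≤ S
  · have := fF_le_two (U := U) (g 0) (g (k' + 1)); linarith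
  push_neg at h1
  classical
  set P : ℕ → Prop := fun j => ∑ i ∈ Finset.range j, fF U (g i) (g (i + 1)) ≤ S / 2 with hP
  have hP0 : P 0 := by simp [hP]; linarith
  set j := Nat.findGreatest P k' with hj
  have hPj : P j := Nat.findGreatest_spec (Nat.zero_le _) hP0
  have hjk : j ≤ k' := Nat.findGreatest_le k'
  have hleft : ∑ i ∈ Finset.range j, fF U (g i) (g (i + 1)) ≤ S / 2 := hPj
  have hsplit : ∑ i ∈ Finset.range (j+1), fF U (g i) (g (i + 1))
      + ∑ i ∈ Finset.Ico (j+1) (k'+1), fF U (g i) (g (i + 1)) = S := by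
    rw [hSdef, Finset.range_eq_Ico, Finset.range_eq_Ico]
    exact Finset.sum_Ico_consecutive _ (by omega) (by omega)
  have hright : ∑ i ∈ Finset.Ico (j+1) (k'+1), fF U (g i) (g (i + 1)) ≤ S / 2 := by
    rcases eq_or_lt_of_le hjk with heq | hlt
    · rw [heq]
      simp only [Finset.Ico_self, Finset.sum_empty]
      linarith
    · have hnP : ¬ P (j + 1) := Nat.findGreatest_is_greatest (n := k') (by omega) (by omega)
      rw [hP] at hnP
      push_neg at hnP
      linarith
  have hmid : fF U (g j) (g (j + 1)) ≤ S := by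
    have := Finset.single_le_sum (f := fun i => fF U (g i) (g (i + 1)))
      (fun i _ => fF_nonneg _ _) (Finset.mem_range.mpr (Nat.lt_succ_of_le hjk))
    simpa [← hSdef] using this
  have hL : fF U (g 0) (g j) ≤ S := by
    have := ih j (Nat.lt_succ_of_le hjk) g
    linarith
  have hR : fF U (g (j + 1)) (g (k' + 1)) ≤ S := by
    have h2 := ih (k' - j) (by omega) (fun i => g (j + 1 + i))
    have e2 : j + 1 + (k' - j) = k' + 1 := by omega
    have e3 : ∑ i ∈ Finset.range (k' - j), fF U (g (j + 1 + i)) (g (j + 1 + i + 1))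
        = ∑ i ∈ Finset.Ico (j+1) (k'+1), fF U (g i) (g (i + 1)) := by
      rw [Finset.sum_Ico_eq_sum_range, show k' + 1 - (j + 1) = k' - j from by omega]
    simp only [e2] at h2
    calc fF U (g (j + 1)) (g (k' + 1)) ≤ 2 * ∑ i ∈ Finset.range (k' - j),
          fF U (g (j + 1 + i)) (g (j + 1 + i + 1)) := by
            have := h2
            convert this using 3 <;> simp only [add_assoc]
      _ ≤ S := by rw [e3]; linarith
  rcases eq_or_lt_of_le hS0 with hS | hS
  · -- S = 0
    have hzero : ∀ (a b : X), fF U a b ≤ S → ∀ n, (a, b) ∈ U (n + 1) := by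
      intro a b hab n
      refine mem_of_fF_lt hmono ?_
      have hp : (0:ℝ) < (2:ℝ)⁻¹ ^ n := by positivity
      linarith
    have hmem : ∀ n, (g 0, g (k' + 1)) ∈ U n := fun n =>
      htriple n _ _ _ _ (hzero _ _ hL n) (hzero _ _ hmid n) (hzero _ _ hR n)
    have hle : ∀ n, fF U (g 0) (g (k' + 1)) ≤ (2:ℝ)⁻¹ ^ n :=
      fun n => (fF_le_iff hmono).1 (hmem n)
    have hle0 : fF U (g 0) (g (k' + 1)) ≤ 0 := by
      by_contra hpos
      push_neg at hpos
      obtain ⟨n, hn⟩ := exists_pow_lt_of_lt_one hpos (by norm_num : (2:ℝ)⁻¹ < 1)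
      exact absurd (hle n) (by linarith)
    linarith
  · -- 0 < S
    have hex : ∃ m, ((2:ℝ)⁻¹) ^ m ≤ S := by
      obtain ⟨m, hm⟩ := exists_pow_lt_of_lt_one hS (by norm_num : (2:ℝ)⁻¹ < 1)
      exact ⟨m, hm.le⟩
    have hm1 : Nat.find hex ≠ 0 := by
      intro h0
      have := Nat.find_spec hex
      rw [h0] at this
      norm_num at this
      linarith
    obtain ⟨n, hn⟩ : ∃ n, Nat.find hex = n + 1 := ⟨Nat.find hex - 1, by omega⟩
    have hn_le : ((2:ℝ)⁻¹) ^ (n + 1) ≤ S := by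
      have := Nat.find_spec hex
      rwa [hn] at this
    have hn_gt : S < ((2:ℝ)⁻¹) ^ n := by
      have := Nat.find_min hex (show n < Nat.find hex by omega)
      push_neg at this
      exact this
    have m1 : (g 0, g j) ∈ U (n + 1) := mem_of_fF_lt hmono (lt_of_le_of_lt hL hn_gt)
    have m2 : (g j, g (j + 1)) ∈ U (n + 1) := mem_of_fF_lt hmono (lt_of_le_of_lt hmid hn_gt)
    have m3 : (g (j + 1), g (k' + 1)) ∈ U (n + 1) := mem_of_fF_lt hmono (lt_of_le_of_lt hR hn_gt)
    have hmem : (g 0, g (k' + 1)) ∈ U n := htriple n _ _ _ _ m1 m2 m3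
    have hfle : fF U (g 0) (g (k' + 1)) ≤ (2:ℝ)⁻¹ ^ n := (fF_le_iff hmono).1 hmem
    have h2 : ((2:ℝ)⁻¹) ^ (n + 1) * 2 = (2:ℝ)⁻¹ ^ n := by rw [pow_succ]; ring
    nlinarith

end Frink

section DF

variable (U : ℕ → Set (X × X))

def chainSums (x y : X) : Set ℝ :=
  {r | ∃ (k : ℕ) (g : ℕ → X), g 0 = x ∧ g k = y ∧
    r = ∑ i ∈ Finset.range k, fF U (g i) (g (i + 1))}

noncomputable def dF (x y : X) : ℝ := sInf (chainSums U x y)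

variable {U}

lemma fF_mem_chainSums (x y : X) : fF U x y ∈ chainSums U x y := by
  refine ⟨1, fun i => if i = 0 then x else y, by simp, by simp, by simp⟩

lemma chainSums_nonempty (x y : X) : (chainSums U x y).Nonempty :=
  ⟨_, fF_mem_chainSums x y⟩

lemma chainSums_nonneg {x y : X} {r : ℝ} (hr : r ∈ chainSums U x y) : 0 ≤ r := by
  obtain ⟨k, g, -, -, rfl⟩ := hr
  exact Finset.sum_nonneg fun i _ => fF_nonneg _ _

lemma chainSums_bddBelow (x y : X) : BddBelow (chainSums U x y) :=
  ⟨0, fun r hr => chainSums_nonneg hr⟩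

lemma dF_nonneg (x y : X) : 0 ≤ dF U x y :=
  Real.sInf_nonneg fun _ hr => chainSums_nonneg hr

lemma dF_le_fF (x y : X) : dF U x y ≤ fF U x y :=
  csInf_le (chainSums_bddBelow x y) (fF_mem_chainSums x y)

lemma dF_self (hrefl : ∀ n (x : X), (x, x) ∈ U n) (x : X) : dF U x x = 0 := by
  have h1 := dF_le_fF (U := U) x x
  rw [fF_self hrefl] at h1
  exact le_antisymm h1 (dF_nonneg x x)

lemma chainSums_add {x y z : X} {a b : ℝ} (ha : a ∈ chainSums U x y)
    (hb : b ∈ chainSums U y z) : a + b ∈ chainSums U x z := by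
  classical
  obtain ⟨k, g, hg0, hgk, rfl⟩ := ha
  obtain ⟨m, h, hh0, hhm, rfl⟩ := hb
  set G : ℕ → X := fun i => if i ≤ k then g i else h (i - k) with hG
  have hGlow : ∀ i, i ≤ k → G i = g i := fun i hi => by simp [hG, hi]
  have hGhigh : ∀ i, k < i → G i = h (i - k) := fun i hi => by
    simp [hG, Nat.not_le.mpr hi]
  refine ⟨k + m, G, ?_, ?_, ?_⟩
  · rw [hGlow 0 (Nat.zero_le k), hg0]
  · rcases Nat.eq_zero_or_pos m with rfl | hm
    · rw [Nat.add_zero, hGlow k le_rfl, hgk, ← hh0, hhm]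
    · rw [hGhigh (k + m) (by omega), show k + m - k = m from by omega, hhm]
  · rw [Finset.sum_range_add]
    congr 1
    · refine Finset.sum_congr rfl fun i hi => ?_
      rw [Finset.mem_range] at hi
      rw [hGlow i (by omega), hGlow (i + 1) (by omega)]
    · refine Finset.sum_congr rfl fun i hi => ?_
      rw [Finset.mem_range] at hi
      have e1 : G (k + i) = h i := by
        rcases Nat.eq_zero_or_pos i with rfl | hp
        · rw [Nat.add_zero, hGlow k le_rfl, hgk, ← hh0]
        · rw [hGhigh (k + i) (by omega), show k + i - k = i from by omega]
      have e2 : G (k + i + 1) = h (i + 1) := by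
        rw [hGhigh (k + i + 1) (by omega), show k + i + 1 - k = i + 1 from by omega]
      rw [e1, e2]

lemma dF_triangle (x y z : X) : dF U x z ≤ dF U x y + dF U y z := by
  have key : ∀ a ∈ chainSums U x y, ∀ b ∈ chainSums U y z, dF U x z ≤ a + b := fun a ha b hb =>
    csInf_le (chainSums_bddBelow x z) (chainSums_add ha hb)
  have step1 : ∀ a ∈ chainSums U x y, dF U x z - a ≤ dF U y z := by
    intro a ha
    exact le_csInf (chainSums_nonempty y z) fun b hb => by linarith [key a ha b hb]
  have step2 : dF U x z - dF U y z ≤ dF U x y :=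
    le_csInf (chainSums_nonempty x y) fun a ha => by linarith [step1 a ha]
  linarith

lemma fF_le_two_dF (hrefl : ∀ n (x : X), (x, x) ∈ U n) (hmono : ∀ n, U (n + 1) ⊆ U n)
    (htriple : ∀ n (a b c e : X), (a, b) ∈ U (n+1) → (b, c) ∈ U (n+1) → (c, e) ∈ U (n+1) →
      (a, e) ∈ U n) (x y : X) : fF U x y ≤ 2 * dF U x y := by
  have h : fF U x y / 2 ≤ dF U x y := by
    refine le_csInf (chainSums_nonempty x y) fun r hr => ?_
    obtain ⟨k, g, hg0, hgk, rfl⟩ := hr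
    have := fF_chain hmono hrefl htriple k g
    rw [hg0, hgk] at this
    linarith
  linarith

end DF


theorem dir1 {X : Type*} [TopologicalSpace X]
    (H : ∀ W : Set (X × X), FineMember W ↔ ∀ x : X, {y | (x, y) ∈ W} ∈ nhds x) :
    QPMCond X := by
  intro N hN
  classical
  set W : Set (X × X) := {p | p.2 ∈ N p.1} with hWdef
  have hWn : ∀ x, {y | (x, y) ∈ W} ∈ nhds x := fun x => hN x
  obtain ⟨q, hqc, hqW⟩ := (H W).2 hWn
  have step : ∀ V, V ∈ q.uni → ∃ V', V' ∈ q.uni ∧ V' ⊆ V ∧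
      ∀ a b c e : X, (a, b) ∈ V' → (b, c) ∈ V' → (c, e) ∈ V' → (a, e) ∈ V := by
    intro V hV
    obtain ⟨V1, hV1, hc1⟩ := q.comp V hV
    obtain ⟨V2, hV2, hc2⟩ := q.comp V1 hV1
    refine ⟨V1 ∩ V2, q.inter_mem _ hV1 _ hV2, ?_, ?_⟩
    · intro p hp
      have := hc1 p.1 p.2 p.2 hp.1 (q.refl _ hV1 p.2)
      simpa using this
    · intro a b c e h1 h2 h3
      exact hc1 a c e (hc2 a b c h1.2 h2.2) h3.1
  choose! F hF1 hF2 hF3 using step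
  set Us : ℕ → Set (X × X) := fun n => F^[n] W with hUs
  have hsucc : ∀ n, Us (n + 1) = F (Us n) := fun n => Function.iterate_succ_apply' F n W
  have hUmem : ∀ n, Us n ∈ q.uni := by
    intro n
    induction n with
    | zero => exact hqW
    | succ n ih => rw [hsucc]; exact hF1 _ ih
  have hmono : ∀ n, Us (n + 1) ⊆ Us n := fun n => by rw [hsucc]; exact hF2 _ (hUmem n)
  have hrefl : ∀ n (x : X), (x, x) ∈ Us n := fun n x => q.refl _ (hUmem n) x
  have htriple : ∀ n (a b c e : X), (a, b) ∈ Us (n+1) → (b, c) ∈ Us (n+1) →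
      (c, e) ∈ Us (n+1) → (a, e) ∈ Us n := by
    intro n a b c e h1 h2 h3
    rw [hsucc] at h1 h2 h3
    exact hF3 _ (hUmem n) a b c e h1 h2 h3
  refine ⟨dF Us, dF_nonneg, dF_self hrefl, dF_triangle, ?_, ?_⟩
  · -- upper semicontinuity
    intro x y₀ c hc
    obtain ⟨n, hn⟩ := exists_pow_lt_of_lt_one (show (0:ℝ) < c - dF Us x y₀ by linarith)
      (by norm_num : (2:ℝ)⁻¹ < 1)
    have hsec : {y | (y₀, y) ∈ Us n} ∈ nhds y₀ := (hqc y₀ _).2 ⟨Us n, hUmem n, subset_rfl⟩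
    filter_upwards [hsec] with y hy
    have h1 : dF Us y₀ y ≤ (2:ℝ)⁻¹ ^ n := (dF_le_fF y₀ y).trans ((fF_le_iff hmono).1 hy)
    have h2 := dF_triangle (U := Us) x y₀ y
    linarith
  · -- ball condition
    intro x y hy
    rw [Set.mem_setOf_eq] at hy
    have h1 : fF Us x y ≤ 2 * dF Us x y := fF_le_two_dF hrefl hmono htriple x y
    have h2 : (x, y) ∈ Us 0 := mem_zero_of_fF_lt_two (by linarith)
    exact h2

theorem dir2 {X : Type*} [TopologicalSpace X] (h : QPMCond X)
    (W : Set (X × X)) (hW : ∀ x : X, {y | (x, y) ∈ W} ∈ nhds x) : FineMember W := by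
  classical
  obtain ⟨d, hd0, hdself, hdtri, hdusc, hdball⟩ := h (fun x => {y | (x, y) ∈ W}) hW
  let pB : ℝ → Finset (Set X) → Set (X × X) := fun ε 𝒢 =>
    {p : X × X | d p.1 p.2 < ε} ∩ ⋂ G ∈ 𝒢, {p : X × X | p.1 ∈ G → p.2 ∈ G}
  have hpB_mem : ∀ ε (𝒢 : Finset (Set X)) (x y : X),
      (x, y) ∈ pB ε 𝒢 ↔ d x y < ε ∧ ∀ G ∈ 𝒢, x ∈ G → y ∈ G := by
    intro ε 𝒢 x y
    simp [pB, Set.mem_iInter]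
  set uniS : Set (Set (X × X)) := {U | ∃ ε > 0, ∃ 𝒢 : Finset (Set X),
    (∀ G ∈ 𝒢, IsOpen G) ∧ pB ε 𝒢 ⊆ U} with huniS
  have hbasic : ∀ ε > 0, ∀ 𝒢 : Finset (Set X), (∀ G ∈ 𝒢, IsOpen G) → pB ε 𝒢 ∈ uniS :=
    fun ε hε 𝒢 h𝒢 => ⟨ε, hε, 𝒢, h𝒢, subset_rfl⟩
  refine ⟨⟨uniS, ?_, ?_, ?_, ?_, ?_⟩, ?_, ?_⟩
  · exact ⟨1, one_pos, ∅, by simp, Set.subset_univ _⟩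
  · rintro U ⟨ε, hε, 𝒢, h𝒢, hsub⟩ V ⟨ε', hε', 𝒢', h𝒢', hsub'⟩
    refine ⟨min ε ε', lt_min hε hε', 𝒢 ∪ 𝒢', ?_, ?_⟩
    · intro G hG
      rcases Finset.mem_union.1 hG with hG | hG
      · exact h𝒢 G hG
      · exact h𝒢' G hG
    · rintro ⟨x, y⟩ hp
      rw [hpB_mem] at hp
      constructor
      · exact hsub (by rw [hpB_mem]; exact ⟨lt_of_lt_of_le hp.1 (min_le_left _ _),
          fun G hG => hp.2 G (Finset.mem_union_left _ hG)⟩)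
      · exact hsub' (by rw [hpB_mem]; exact ⟨lt_of_lt_of_le hp.1 (min_le_right _ _),
          fun G hG => hp.2 G (Finset.mem_union_right _ hG)⟩)
  · rintro U ⟨ε, hε, 𝒢, h𝒢, hsub⟩ V hUV
    exact ⟨ε, hε, 𝒢, h𝒢, hsub.trans hUV⟩
  · rintro U ⟨ε, hε, 𝒢, h𝒢, hsub⟩ x
    refine hsub ?_
    rw [hpB_mem]
    exact ⟨by rw [hdself]; exact hε, fun G _ hx => hx⟩
  · rintro U ⟨ε, hε, 𝒢, h𝒢, hsub⟩
    refine ⟨pB (ε/2) 𝒢, hbasic _ (by linarith) _ h𝒢, ?_⟩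
    intro a b c hab hbc
    rw [hpB_mem] at hab hbc
    refine hsub ?_
    rw [hpB_mem]
    refine ⟨?_, fun G hG ha => hbc.2 G hG (hab.2 G hG ha)⟩
    calc d a c ≤ d a b + d b c := hdtri a b c
      _ < ε/2 + ε/2 := by linarith [hab.1, hbc.1]
      _ = ε := by ring
  · -- compatibility
    intro x s
    constructor
    · intro hs
      obtain ⟨G, hGs, hGopen, hxG⟩ := mem_nhds_iff.1 hs
      refine ⟨pB 1 {G}, hbasic 1 one_pos {G} (by simpa using hGopen), ?_⟩
      intro y hy
      rw [Set.mem_setOf_eq, hpB_mem] at hy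
      exact hGs (hy.2 G (Finset.mem_singleton_self G) hxG)
    · rintro ⟨U, ⟨ε, hε, 𝒢, h𝒢, hsub⟩, hUs⟩
      have hopen : IsOpen ({y | d x y < ε} ∩ ⋂ G ∈ 𝒢, {y | x ∈ G → y ∈ G}) := by
        refine IsOpen.inter ?_ (isOpen_biInter_finset fun G hG => ?_)
        · exact (upperSemicontinuous_iff_isOpen_preimage.1 (hdusc x)) ε
        · by_cases hx : x ∈ G
          · have hEq : {y | x ∈ G → y ∈ G} = G := by ext y; simp [hx]
            rw [hEq]; exact h𝒢 G hG
          · have hEq : {y : X | x ∈ G → y ∈ G} = Set.univ := by ext y; simp [hx]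
            rw [hEq]; exact isOpen_univ
      refine mem_nhds_iff.2 ⟨{y | d x y < ε} ∩ ⋂ G ∈ 𝒢, {y | x ∈ G → y ∈ G}, ?_, hopen, ?_⟩
      · intro y hy
        refine hUs (hsub ?_)
        rw [hpB_mem]
        exact ⟨hy.1, fun G hG hxG => (Set.mem_iInter₂.1 hy.2) G hG hxG⟩
      · exact ⟨by rw [Set.mem_setOf_eq, hdself]; exact hε,
          Set.mem_iInter₂.2 fun G hG hx => hx⟩
  · -- W belongs
    refine ⟨1, one_pos, ∅, by simp, ?_⟩
    rintro ⟨x, y⟩ hp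
    rw [hpB_mem] at hp
    exact hdball x hp.1

end EN


/-- (4) ⟺ (6) of Elfard–Nickolas: if the finest compatible quasi-uniformity on `X` consists
exactly of the neighborhoods of the diagonal in `X_d × X`, then the quasi-pseudometric
condition holds; conversely, the quasi-pseudometric condition implies that every neighborhood
of the diagonal in `X_d × X` belongs to the finest quasi-uniformity. -/
theorem fine_eq_diag_nbhds_iff_qpm {X : Type*} [TopologicalSpace X] :
    ((∀ W : Set (X × X), FineMember W ↔ ∀ x : X, {y | (x, y) ∈ W} ∈ nhds x) → QPMCond X) ∧
    (QPMCond X →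
      ∀ W : Set (X × X), (∀ x : X, {y | (x, y) ∈ W} ∈ nhds x) → FineMember W) := by
  exact ⟨EN.dir1, EN.dir2⟩
end
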